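/- arXiv:2503.13207 — 5 statements merged into one kernel-verified Lean document; each statement's English description precedes it below -/
import Mathlib

section
/- Let A and B be n×n complex matrices and let F : ℝ → ℝ be a Lipschitz continuous function with bounded support. Then (1/n) |Σ_{i=1}^{n} ( F(σ_i(A)) − F(σ_i(B)) )| ≤ ‖F'‖_1 · rank(A − B) / n. -/
open MeasureTheory

noncomputable def singularValues {n : ℕ} (A : Matrix (Fin n) (Fin n) ℂ) : Fin n → ℝ :=
  fun i => Real.sqrt ((Matrix.isHermitian_conjTranspose_mul_self A).eigenvalues i)

noncomputable def fCoeff (f : ℝ → ℂ) (j : ℤ) : ℂ :=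
  (1 / (2 * Real.pi)) * ∫ x in (-Real.pi)..Real.pi, f x * Complex.exp (-(Complex.I * j * x))

noncomputable def toeplitzMat (f : ℝ → ℂ) (n : ℕ) : Matrix (Fin n) (Fin n) ℂ :=
  Matrix.of fun i j => fCoeff f (((i : ℕ) : ℤ) - ((j : ℕ) : ℤ))

noncomputable def truncFourier (f : ℝ → ℂ) (N : ℕ) : ℝ → ℂ :=
  fun x => ∑ j ∈ Finset.Icc (-(N:ℤ)) (N:ℤ), fCoeff f j * Complex.exp (Complex.I * j * x)

noncomputable def l2Norm (g : ℝ → ℂ) : ℝ :=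
  Real.sqrt (∫ x in (0:ℝ)..(2*Real.pi), ‖g x‖ ^ 2)

noncomputable def totalVar (F : ℝ → ℝ) : ℝ := (eVariationOn F Set.univ).toReal

noncomputable def supNorm (F : ℝ → ℝ) : ℝ := ⨆ x, |F x|


section Aux

open Matrix Set

local notation "⟪" x ", " y "⟫" => @inner ℂ _ _ x y

variable {n : ℕ}

lemma euclid_eigen (M : Matrix (Fin n) (Fin n) ℂ) (hH : (Mᴴ * M).IsHermitian) (i : Fin n) :
    Matrix.toEuclideanLin (Mᴴ * M) (hH.eigenvectorBasis i)
      = (hH.eigenvalues i : ℂ) • hH.eigenvectorBasis i := by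
  have h := hH.mulVec_eigenvectorBasis i
  apply (WithLp.equiv 2 _).injective
  simpa [Matrix.toEuclideanLin_apply] using congrArg (fun f => f) h


lemma norm_sq_eq (M : Matrix (Fin n) (Fin n) ℂ) (hH : (Mᴴ * M).IsHermitian)
    (x : EuclideanSpace ℂ (Fin n)) :
    ‖Matrix.toEuclideanLin M x‖ ^ 2
      = ∑ i, hH.eigenvalues i * ‖⟪hH.eigenvectorBasis i, x⟫‖ ^ 2 := by
  set u := hH.eigenvectorBasis
  set TM := Matrix.toEuclideanLin M
  have hTH : Matrix.toEuclideanLin (Mᴴ * M) = (LinearMap.adjoint TM) ∘ₗ TM := by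
    rw [Matrix.toEuclideanLin_eq_toLin, Matrix.toLin_mul _ (PiLp.basisFun 2 ℂ (Fin n)) _,
      ← Matrix.toEuclideanLin_eq_toLin, Matrix.toEuclideanLin_conjTranspose_eq_adjoint]
  have key : ⟪TM x, TM x⟫ = ∑ i, ((hH.eigenvalues i * ‖⟪u i, x⟫‖ ^ 2 : ℝ) : ℂ) := by
    have h1 : ⟪TM x, TM x⟫ = ⟪x, Matrix.toEuclideanLin (Mᴴ * M) x⟫ := by
      rw [hTH]; simp [LinearMap.adjoint_inner_right]
    rw [h1, ← (u).sum_inner_mul_inner x (Matrix.toEuclideanLin (Mᴴ * M) x)]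
    refine Finset.sum_congr rfl fun i _ => ?_
    have h2 : ⟪u i, Matrix.toEuclideanLin (Mᴴ * M) x⟫
        = (hH.eigenvalues i : ℂ) * ⟪u i, x⟫ := by
      rw [hTH]
      simp only [LinearMap.comp_apply, LinearMap.adjoint_inner_right]
      rw [← LinearMap.adjoint_inner_left, ← LinearMap.comp_apply, ← hTH, euclid_eigen M hH i,
        inner_smul_left]
      simp [Complex.conj_ofReal]; exact Or.inl rfl
    have hz : ⟪x, u i⟫ = (starRingEnd ℂ) ⟪u i, x⟫ := (inner_conj_symm _ _).symm
    rw [h2, hz]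
    set z := ⟪u i, x⟫ with hzdef
    have hcz : (starRingEnd ℂ) z * z = ((‖z‖ ^ 2 : ℝ) : ℂ) := by
      have := Complex.normSq_eq_conj_mul_self (z := z)
      rw [← this, Complex.normSq_eq_norm_sq]
    calc (starRingEnd ℂ) z * ((hH.eigenvalues i : ℂ) * z)
        = (hH.eigenvalues i : ℂ) * ((starRingEnd ℂ) z * z) := by ring
      _ = (hH.eigenvalues i : ℂ) * ((‖z‖ ^ 2 : ℝ) : ℂ) := by rw [hcz]
      _ = ((hH.eigenvalues i * ‖z‖ ^ 2 : ℝ) : ℂ) := by push_cast; ring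
  have hre : (‖TM x‖ ^ 2 : ℝ) = RCLike.re ⟪TM x, TM x⟫ :=
    (inner_self_eq_norm_sq (𝕜 := ℂ) _).symm
  rw [hre, key, map_sum]
  simp only [RCLike.re_to_complex, Complex.ofReal_re]


lemma parseval (b : OrthonormalBasis (Fin n) ℂ (EuclideanSpace ℂ (Fin n)))
    (x : EuclideanSpace ℂ (Fin n)) :
    ‖x‖ ^ 2 = ∑ i, ‖⟪b i, x⟫‖ ^ 2 := by
  have key : ⟪x, x⟫ = ∑ i, ((‖⟪b i, x⟫‖ ^ 2 : ℝ) : ℂ) := by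
    rw [← b.sum_inner_mul_inner x x]
    refine Finset.sum_congr rfl fun i _ => ?_
    have hz : ⟪x, b i⟫ = (starRingEnd ℂ) ⟪b i, x⟫ := (inner_conj_symm _ _).symm
    rw [hz]
    have := Complex.normSq_eq_conj_mul_self (z := ⟪b i, x⟫)
    rw [← this, Complex.normSq_eq_norm_sq]
  have hre : (‖x‖ ^ 2 : ℝ) = RCLike.re ⟪x, x⟫ := (inner_self_eq_norm_sq (𝕜 := ℂ) _).symm
  rw [hre, key, map_sum]
  simp only [RCLike.re_to_complex, Complex.ofReal_re]


lemma vanish (b : OrthonormalBasis (Fin n) ℂ (EuclideanSpace ℂ (Fin n)))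
    (S : Finset (Fin n)) (x : EuclideanSpace ℂ (Fin n))
    (hx : x ∈ Submodule.span ℂ (⇑b '' ↑S)) {i : Fin n} (hi : i ∉ S) :
    ⟪b i, x⟫ = 0 := by
  induction hx using Submodule.span_induction with
  | mem y hy =>
      obtain ⟨j, hj, rfl⟩ := hy
      have hij : i ≠ j := fun h => hi (h ▸ hj)
      exact b.orthonormal.2 hij
  | zero => exact inner_zero_right _
  | add y z _ _ hy hz => rw [inner_add_right, hy, hz, add_zero]
  | smul c y _ hy => rw [inner_smul_right, hy, mul_zero]


lemma quad_lower (M : Matrix (Fin n) (Fin n) ℂ) (hH : (Mᴴ * M).IsHermitian)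
    (S : Finset (Fin n)) (c : ℝ) (hc : ∀ i ∈ S, c ≤ hH.eigenvalues i)
    (x : EuclideanSpace ℂ (Fin n))
    (hx : x ∈ Submodule.span ℂ (⇑hH.eigenvectorBasis '' ↑S)) :
    c * ‖x‖ ^ 2 ≤ ‖Matrix.toEuclideanLin M x‖ ^ 2 := by
  rw [norm_sq_eq M hH x, parseval hH.eigenvectorBasis x, Finset.mul_sum]
  refine Finset.sum_le_sum fun i _ => ?_
  by_cases hi : i ∈ S
  · exact mul_le_mul_of_nonneg_right (hc i hi) (by positivity)
  · rw [vanish _ S x hx hi]; simp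


lemma quad_upper (M : Matrix (Fin n) (Fin n) ℂ) (hH : (Mᴴ * M).IsHermitian)
    (S : Finset (Fin n)) (c : ℝ) (hc : ∀ i ∈ S, hH.eigenvalues i ≤ c)
    (x : EuclideanSpace ℂ (Fin n))
    (hx : x ∈ Submodule.span ℂ (⇑hH.eigenvectorBasis '' ↑S)) :
    ‖Matrix.toEuclideanLin M x‖ ^ 2 ≤ c * ‖x‖ ^ 2 := by
  rw [norm_sq_eq M hH x, parseval hH.eigenvectorBasis x, Finset.mul_sum]
  refine Finset.sum_le_sum fun i _ => ?_
  by_cases hi : i ∈ S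
  · exact mul_le_mul_of_nonneg_right (hc i hi) (by positivity)
  · rw [vanish _ S x hx hi]; simp


lemma finrank_span_onb (b : OrthonormalBasis (Fin n) ℂ (EuclideanSpace ℂ (Fin n)))
    (S : Finset (Fin n)) :
    Module.finrank ℂ (Submodule.span ℂ (⇑b '' ↑S)) = S.card := by
  have hon : Orthonormal ℂ (fun i : {x // x ∈ S} => b i) :=
    b.orthonormal.comp _ Subtype.coe_injective
  have hli := hon.linearIndependent
  have hrange : Set.range (fun i : {x // x ∈ S} => b i) = ⇑b '' ↑S := by
    ext y; simp
  have := finrank_span_eq_card hli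
  rw [hrange] at this
  rw [this, Fintype.card_coe]


lemma finrank_ker_toEuclideanLin (C : Matrix (Fin n) (Fin n) ℂ) :
    Module.finrank ℂ (LinearMap.ker (Matrix.toEuclideanLin C)) + C.rank = n := by
  have h := LinearMap.finrank_range_add_finrank_ker (Matrix.toEuclideanLin C)
  have h2 : C.rank = Module.finrank ℂ (LinearMap.range (Matrix.toEuclideanLin C)) :=
    Matrix.rank_eq_finrank_range_toLin C (PiLp.basisFun 2 ℂ (Fin n)) (PiLp.basisFun 2 ℂ (Fin n))
  rw [finrank_euclideanSpace, Fintype.card_fin] at h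
  omega


lemma interlace (A B : Matrix (Fin n) (Fin n) ℂ) (i j : Fin n)
    (h : (j : ℕ) + (A - B).rank ≤ (i : ℕ)) :
    singularValues A (Tuple.sort (singularValues A) j)
      ≤ singularValues B (Tuple.sort (singularValues B) i) := by
  classical
  set hA := Matrix.isHermitian_conjTranspose_mul_self A with hAdef
  set hB := Matrix.isHermitian_conjTranspose_mul_self B with hBdef
  set σ := Tuple.sort (singularValues A)
  set τ := Tuple.sort (singularValues B)
  set r := (A - B).rank
  set SA : Finset (Fin n) := (Finset.Ici j).image σ with hSA
  set SB : Finset (Fin n) := (Finset.Iic i).image τ with hSB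
  set VA := Submodule.span ℂ (⇑hA.eigenvectorBasis '' ↑SA)
  set VB := Submodule.span ℂ (⇑hB.eigenvectorBasis '' ↑SB)
  set K := LinearMap.ker (Matrix.toEuclideanLin (A - B))
  have hcardA : SA.card = n - (j : ℕ) := by
    rw [hSA, Finset.card_image_of_injective _ σ.injective, Fin.card_Ici]
  have hcardB : SB.card = (i : ℕ) + 1 := by
    rw [hSB, Finset.card_image_of_injective _ τ.injective, Fin.card_Iic]
  have h1 : Module.finrank ℂ VA = n - (j : ℕ) := by
    rw [show VA = _ from rfl, finrank_span_onb, hcardA]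
  have h2 : Module.finrank ℂ VB = (i : ℕ) + 1 := by
    rw [show VB = _ from rfl, finrank_span_onb, hcardB]
  have h3 : Module.finrank ℂ K + r = n := finrank_ker_toEuclideanLin (A - B)
  have hsub : ∀ P Q : Submodule ℂ (EuclideanSpace ℂ (Fin n)),
      Module.finrank ℂ P + Module.finrank ℂ Q ≤ n + Module.finrank ℂ (P ⊓ Q : Submodule ℂ _) := by
    intro P Q
    have := Submodule.finrank_sup_add_finrank_inf_eq P Q
    have hle : Module.finrank ℂ (P ⊔ Q : Submodule ℂ _) ≤ n := by
      have := Submodule.finrank_le (P ⊔ Q : Submodule ℂ (EuclideanSpace ℂ (Fin n)))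
      rwa [finrank_euclideanSpace, Fintype.card_fin] at this
    omega
  have hd1 := hsub VA K
  have hd2 := hsub (VA ⊓ K) VB
  have hjn : (j : ℕ) < n := j.isLt
  have hin : (i : ℕ) < n := i.isLt
  have hpos : 0 < Module.finrank ℂ ((VA ⊓ K) ⊓ VB : Submodule ℂ _) := by omega
  have hne : ((VA ⊓ K) ⊓ VB : Submodule ℂ (EuclideanSpace ℂ (Fin n))) ≠ ⊥ := by
    intro hbot
    rw [hbot, finrank_bot] at hpos
    omega
  obtain ⟨x, hx, hx0⟩ := Submodule.exists_mem_ne_zero_of_ne_bot hne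
  have hxVB : x ∈ VB := (Submodule.mem_inf.mp hx).2
  have hxVA : x ∈ VA := (Submodule.mem_inf.mp (Submodule.mem_inf.mp hx).1).1
  have hxK : x ∈ K := (Submodule.mem_inf.mp (Submodule.mem_inf.mp hx).1).2
  have hsortA := Tuple.monotone_sort (singularValues A)
  have hsortB := Tuple.monotone_sort (singularValues B)
  have hlow : hA.eigenvalues (σ j) * ‖x‖ ^ 2 ≤ ‖Matrix.toEuclideanLin A x‖ ^ 2 := by
    refine quad_lower A hA SA _ (fun m hm => ?_) x hxVA
    obtain ⟨k, hk, rfl⟩ := Finset.mem_image.mp hm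
    have hjk : j ≤ k := Finset.mem_Ici.mp hk
    have := hsortA hjk
    simp only [Function.comp_apply] at this
    have h0j := Matrix.eigenvalues_conjTranspose_mul_self_nonneg A (σ j)
    have h0k := Matrix.eigenvalues_conjTranspose_mul_self_nonneg A (σ k)
    have hsq := pow_le_pow_left₀ (Real.sqrt_nonneg _) this 2
    calc hA.eigenvalues (σ j) = singularValues A (σ j) ^ 2 := (Real.sq_sqrt h0j).symm
      _ ≤ singularValues A (σ k) ^ 2 := hsq
      _ = hA.eigenvalues (σ k) := Real.sq_sqrt h0k
  have hup : ‖Matrix.toEuclideanLin B x‖ ^ 2 ≤ hB.eigenvalues (τ i) * ‖x‖ ^ 2 := by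
    refine quad_upper B hB SB _ (fun m hm => ?_) x hxVB
    obtain ⟨k, hk, rfl⟩ := Finset.mem_image.mp hm
    have hki : k ≤ i := Finset.mem_Iic.mp hk
    have := hsortB hki
    simp only [Function.comp_apply] at this
    have h0k := Matrix.eigenvalues_conjTranspose_mul_self_nonneg B (τ k)
    have h0i := Matrix.eigenvalues_conjTranspose_mul_self_nonneg B (τ i)
    have hsq := pow_le_pow_left₀ (Real.sqrt_nonneg _) this 2
    calc hB.eigenvalues (τ k) = singularValues B (τ k) ^ 2 := (Real.sq_sqrt h0k).symm
      _ ≤ singularValues B (τ i) ^ 2 := hsq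
      _ = hB.eigenvalues (τ i) := Real.sq_sqrt h0i
  have hAB : Matrix.toEuclideanLin A x = Matrix.toEuclideanLin B x := by
    have : Matrix.toEuclideanLin (A - B) x = 0 := hxK
    rw [map_sub] at this
    simpa [sub_eq_zero] using this
  have hx2 : (0:ℝ) < ‖x‖ ^ 2 := pow_pos (norm_pos_iff.mpr hx0) 2
  have hfin : hA.eigenvalues (σ j) ≤ hB.eigenvalues (τ i) := by
    have := hlow.trans (hAB ▸ hup)
    exact le_of_mul_le_mul_right this hx2
  exact Real.sqrt_le_sqrt hfin


lemma mono_shift_sum (h : ℕ → ℝ) (hm : Monotone h) (N r : ℕ) :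
    ∑ i ∈ Finset.range N, (h (i + r) - h i) ≤ r * (h (N + r) - h 0) := by
  induction r with
  | zero => simp
  | succ r ih =>
      have tele : ∑ i ∈ Finset.range N, (h (i + r + 1) - h (i + r))
          = h (N + r) - h r := by
        have := Finset.sum_range_sub (fun i => h (i + r)) N
        rw [Finset.sum_sub_distrib] at this ⊢
        simpa [Nat.add_right_comm] using this
      have split : ∑ i ∈ Finset.range N, (h (i + (r+1)) - h i)
          = (∑ i ∈ Finset.range N, (h (i + r) - h i))
            + ∑ i ∈ Finset.range N, (h (i + r + 1) - h (i + r)) := by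
        rw [← Finset.sum_add_distrib]
        refine Finset.sum_congr rfl fun i _ => ?_
        have : i + (r + 1) = i + r + 1 := by omega
        rw [this]; ring
      rw [split, tele]
      have h1 : h r ≥ h 0 := hm (Nat.zero_le r)
      have h2 : h (N + r) ≤ h (N + (r+1)) := hm (by omega)
      have h3 : (r : ℝ) * (h (N + r) - h 0) ≤ r * (h (N + (r+1)) - h 0) := by
        apply mul_le_mul_of_nonneg_left (by linarith) (by positivity)
      push_cast
      nlinarith [ih]

-- global bounded variation

lemma bv_univ (F : ℝ → ℝ) (hFsupp : HasCompactSupport F)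
    (L : NNReal) (hFlip : LipschitzWith L F) :
    BoundedVariationOn F Set.univ := by
  obtain ⟨R, hR⟩ := hFsupp.isBounded.subset_closedBall 0
  set R' : ℝ := |R| + 1 with hR'
  have hzero : ∀ x : ℝ, x ≤ -R' ∨ R' ≤ x → F x = 0 := by
    intro x hx
    apply image_eq_zero_of_notMem_tsupport
    intro hmem
    have := hR hmem
    rw [Metric.mem_closedBall, Real.dist_eq, sub_zero] at this
    have h1 := (abs_le.mp this).1
    have h2 := (abs_le.mp this).2
    have h3 := le_abs_self R
    have h4 := neg_abs_le R
    rcases hx with h | h <;> simp only [hR'] at h <;> linarith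
  have hRR : -R' ≤ R' := by nlinarith [abs_nonneg R]
  have hid : BoundedVariationOn id (Icc (-R') R') := by
    have h := MonotoneOn.eVariationOn_le (f := id) (s := Icc (-R') R')
      (monotoneOn_id) (left_mem_Icc.mpr hRR) (right_mem_Icc.mpr hRR)
    simp only [inter_self, id] at h
    exact (h.trans_lt ENNReal.ofReal_lt_top).ne
  have hF_Icc : BoundedVariationOn F (Icc (-R') R') := by
    have := hFlip.comp_boundedVariationOn hid
    simpa [Function.comp_def] using this
  have h1 : eVariationOn F (Iic (-R')) = 0 := by
    apply eVariationOn.constant_on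
    rintro y ⟨x, hx, rfl⟩ z ⟨x', hx', rfl⟩
    rw [hzero x (Or.inl hx), hzero x' (Or.inl hx')]
  have h2 : eVariationOn F (Ici R') = 0 := by
    apply eVariationOn.constant_on
    rintro y ⟨x, hx, rfl⟩ z ⟨x', hx', rfl⟩
    rw [hzero x (Or.inr hx), hzero x' (Or.inr hx')]
  have hsplit1 : eVariationOn F (Ici (-R'))
      = eVariationOn F (Icc (-R') R') + eVariationOn F (Ici R') := by
    rw [← Set.Icc_union_Ici_eq_Ici hRR]
    exact eVariationOn.union F ⟨right_mem_Icc.mpr hRR, fun y hy => hy.2⟩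
      ⟨self_mem_Ici, fun y hy => hy⟩
  have hsplit2 : eVariationOn F univ
      = eVariationOn F (Iic (-R')) + eVariationOn F (Ici (-R')) := by
    rw [← Set.Iic_union_Ici (a := -R')]
    exact eVariationOn.union F isGreatest_Iic isLeast_Ici
  have : eVariationOn F univ = eVariationOn F (Icc (-R') R') := by
    rw [hsplit2, h1, hsplit1, h2, zero_add, add_zero]
  show eVariationOn F univ ≠ ⊤
  rw [this]
  exact hF_Icc


lemma one_side {n' : ℕ} (a b : Fin n' → ℝ) (ha : Monotone a)
    (ha0 : ∀ k, 0 ≤ a k) (hb0 : ∀ k, 0 ≤ b k)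
    (M : ℝ) (haM : ∀ k, a k ≤ M) (hM0 : 0 ≤ M) (r : ℕ)
    (hab : ∀ i j : Fin n', (j : ℕ) + r ≤ (i : ℕ) → a j ≤ b i)
    (p : ℝ → ℝ) (hp : Monotone p) :
    ∑ k : Fin n', (p (a k) - p (b k)) ≤ r * (p M - p 0) := by
  set ea : ℕ → ℝ := fun m => if m < r then 0 else if h : m - r < n' then a ⟨m - r, h⟩ else M
    with hea
  have hea_mono : Monotone ea := by
    intro m m' hmm'
    simp only [hea]
    by_cases h1 : m < r
    · rw [if_pos h1]
      by_cases h2 : m' < r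
      · rw [if_pos h2]
      · rw [if_neg h2]
        by_cases h3 : m' - r < n'
        · rw [dif_pos h3]; exact ha0 _
        · rw [dif_neg h3]; exact hM0
    · rw [if_neg h1, if_neg (by omega : ¬ m' < r)]
      by_cases h3 : m - r < n'
      · rw [dif_pos h3]
        by_cases h4 : m' - r < n'
        · rw [dif_pos h4]; exact ha (by simp only [Fin.mk_le_mk]; omega)
        · rw [dif_neg h4]; exact haM _
      · rw [dif_neg h3, dif_neg (by omega : ¬ m' - r < n')]
  have e1 : ∀ k : Fin n', ea ((k : ℕ) + r) = a k := by
    intro k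
    simp only [hea]
    rw [if_neg (by omega), dif_pos (by omega : (k : ℕ) + r - r < n')]
    congr 1
    apply Fin.ext
    simp only [Fin.val_mk]
    omega
  have e2 : ∀ k : Fin n', ea (k : ℕ) ≤ b k := by
    intro k
    simp only [hea]
    by_cases h1 : (k : ℕ) < r
    · rw [if_pos h1]; exact hb0 k
    · rw [if_neg h1, dif_pos (by omega : (k : ℕ) - r < n')]
      exact hab k ⟨(k : ℕ) - r, by omega⟩ (by simp only [Fin.val_mk]; omega)
  have e3 : ea (n' + r) = M := by
    simp only [hea]
    rw [if_neg (by omega), dif_neg (by omega : ¬ n' + r - r < n')]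
  have e4 : (0 : ℝ) ≤ ea 0 := by
    simp only [hea]
    by_cases h1 : 0 < r
    · rw [if_pos h1]
    · rw [if_neg (by omega)]
      by_cases h3 : 0 - r < n'
      · rw [dif_pos h3]; exact ha0 _
      · rw [dif_neg h3]; exact hM0
  have step1 : ∑ k : Fin n', (p (a k) - p (b k))
      ≤ ∑ k : Fin n', (p (ea ((k : ℕ) + r)) - p (ea (k : ℕ))) := by
    refine Finset.sum_le_sum fun k _ => ?_
    rw [e1 k]
    exact sub_le_sub_left (hp (e2 k)) _
  have step2 : ∑ k : Fin n', (p (ea ((k : ℕ) + r)) - p (ea (k : ℕ)))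
      = ∑ i ∈ Finset.range n', ((p ∘ ea) (i + r) - (p ∘ ea) i) :=
    Fin.sum_univ_eq_sum_range (fun m => p (ea (m + r)) - p (ea m)) n'
  have step3 := mono_shift_sum (p ∘ ea) (hp.comp hea_mono) n' r
  have step4 : (r : ℝ) * ((p ∘ ea) (n' + r) - (p ∘ ea) 0) ≤ r * (p M - p 0) := by
    apply mul_le_mul_of_nonneg_left _ (by positivity)
    simp only [Function.comp_apply, e3]
    exact sub_le_sub_left (hp e4) _
  linarith [step1, step2 ▸ step1, step3, step4]


lemma key_sum {n' : ℕ} (F : ℝ → ℝ) (a b : Fin n' → ℝ) (ha : Monotone a) (hb : Monotone b)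
    (ha0 : ∀ k, 0 ≤ a k) (hb0 : ∀ k, 0 ≤ b k)
    (M : ℝ) (haM : ∀ k, a k ≤ M) (hbM : ∀ k, b k ≤ M) (hM0 : 0 ≤ M) (r : ℕ)
    (hab : ∀ i j : Fin n', (j : ℕ) + r ≤ (i : ℕ) → a j ≤ b i)
    (hba : ∀ i j : Fin n', (j : ℕ) + r ≤ (i : ℕ) → b j ≤ a i)
    (p q : ℝ → ℝ) (hp : Monotone p) (hq : Monotone q)
    (hF : ∀ x, F x = p x - q x) :
    ∑ k : Fin n', (F (a k) - F (b k)) ≤ r * ((p M - p 0) + (q M - q 0)) := by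
  have h1 := one_side a b ha ha0 hb0 M haM hM0 r hab p hp
  have h2 := one_side b a hb hb0 ha0 M hbM hM0 r hba q hq
  have : ∑ k : Fin n', (F (a k) - F (b k))
      = ∑ k : Fin n', (p (a k) - p (b k)) + ∑ k : Fin n', (q (b k) - q (a k)) := by
    rw [← Finset.sum_add_distrib]
    exact Finset.sum_congr rfl fun k _ => by rw [hF, hF]; ring
  rw [this]
  linarith


lemma rank_neg' {n : ℕ} (C : Matrix (Fin n) (Fin n) ℂ) : (-C).rank = C.rank := by
  have h : (-C).mulVecLin = -(C.mulVecLin) := by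
    ext x
    simp [Matrix.neg_mulVec]
  rw [Matrix.rank, Matrix.rank, h, LinearMap.range_neg]


lemma sum_diff_le {n : ℕ} (A B : Matrix (Fin n) (Fin n) ℂ)
    (F : ℝ → ℝ) (hFsupp : HasCompactSupport F)
    (hFlip : ∃ L : ℝ, ∀ x y : ℝ, |F x - F y| ≤ L * |x - y|) :
    ∑ i : Fin n, (F (singularValues A i) - F (singularValues B i))
      ≤ totalVar F * ((A - B).rank : ℝ) := by
  classical
  obtain ⟨L, hL⟩ := hFlip
  have hL' : LipschitzWith (max L 0).toNNReal F := by
    apply LipschitzWith.of_dist_le_mul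
    intro x y
    rw [Real.dist_eq, Real.dist_eq, Real.coe_toNNReal _ (le_max_right L 0)]
    calc |F x - F y| ≤ L * |x - y| := hL x y
      _ ≤ max L 0 * |x - y| := mul_le_mul_of_nonneg_right (le_max_left _ _) (abs_nonneg _)
  have hBV : BoundedVariationOn F Set.univ := bv_univ F hFsupp _ hL'
  have hlBV := hBV.locallyBoundedVariationOn
  set v := variationOnFromTo F Set.univ 0 with hv
  have hvadd : ∀ x y : ℝ, v x + variationOnFromTo F Set.univ x y = v y := fun x y =>
    variationOnFromTo.add hlBV (mem_univ 0) (mem_univ x) (mem_univ y)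
  have hdF : ∀ x y : ℝ, x ≤ y → |F y - F x| ≤ variationOnFromTo F Set.univ x y := by
    intro x y hxy
    rw [variationOnFromTo.eq_of_le F Set.univ hxy]
    have := (hBV.mono (inter_subset_left)).dist_le
      (⟨trivial, ⟨hxy, le_refl y⟩⟩ : y ∈ Set.univ ∩ Set.Icc x y)
      (⟨trivial, ⟨le_refl x, hxy⟩⟩ : x ∈ Set.univ ∩ Set.Icc x y)
    rwa [Real.dist_eq] at this
  set p : ℝ → ℝ := fun x => (v x + F x) / 2 with hpdef
  set q : ℝ → ℝ := fun x => (v x - F x) / 2 with hqdef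
  have hp : Monotone p := by
    intro x y hxy
    have h1 := hvadd x y
    have h2 := abs_le.mp (hdF x y hxy)
    show (v x + F x) / 2 ≤ (v y + F y) / 2
    linarith [h2.1, h2.2]
  have hq : Monotone q := by
    intro x y hxy
    have h1 := hvadd x y
    have h2 := abs_le.mp (hdF x y hxy)
    show (v x - F x) / 2 ≤ (v y - F y) / 2
    linarith [h2.1, h2.2]
  have hFpq : ∀ x, F x = p x - q x := fun x => by
    simp only [hpdef, hqdef]; ring
  rcases Nat.eq_zero_or_pos n with hn | hn
  · subst hn
    simp only [Finset.univ_eq_empty, Finset.sum_empty]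
    have : (0:ℝ) ≤ totalVar F := ENNReal.toReal_nonneg
    positivity
  · set σ := Tuple.sort (singularValues A) with hσ
    set τ := Tuple.sort (singularValues B) with hτ
    set a : Fin n → ℝ := fun k => singularValues A (σ k) with hadef
    set b : Fin n → ℝ := fun k => singularValues B (τ k) with hbdef
    have ha : Monotone a := Tuple.monotone_sort (singularValues A)
    have hb : Monotone b := Tuple.monotone_sort (singularValues B)
    have ha0 : ∀ k, 0 ≤ a k := fun k => Real.sqrt_nonneg _
    have hb0 : ∀ k, 0 ≤ b k := fun k => Real.sqrt_nonneg _
    set last : Fin n := ⟨n - 1, by omega⟩ with hlast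
    set M : ℝ := max (a last) (b last) with hM
    have haM : ∀ k, a k ≤ M := fun k =>
      le_trans (ha (by simp only [hlast, Fin.le_def, Fin.val_mk]; omega)) (le_max_left _ _)
    have hbM : ∀ k, b k ≤ M := fun k =>
      le_trans (hb (by simp only [hlast, Fin.le_def, Fin.val_mk]; omega)) (le_max_right _ _)
    have hM0 : 0 ≤ M := le_trans (ha0 last) (le_max_left _ _)
    have hab : ∀ i j : Fin n, (j : ℕ) + (A - B).rank ≤ (i : ℕ) → a j ≤ b i :=
      fun i j h => interlace A B i j h
    have hba : ∀ i j : Fin n, (j : ℕ) + (A - B).rank ≤ (i : ℕ) → b j ≤ a i := by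
      intro i j h
      have hrk : (B - A).rank = (A - B).rank := by
        rw [show B - A = -(A - B) from (neg_sub A B).symm, rank_neg']
      exact interlace B A i j (by rw [hrk]; exact h)
    have hmain := key_sum F a b ha hb ha0 hb0 M haM hbM hM0 ((A - B).rank) hab hba p q hp hq hFpq
    have hsum : ∑ i : Fin n, (F (singularValues A i) - F (singularValues B i))
        = ∑ k : Fin n, (F (a k) - F (b k)) := by
      rw [Finset.sum_sub_distrib, Finset.sum_sub_distrib]
      congr 1
      · exact (Equiv.sum_comp σ (fun i => F (singularValues A i))).symm
      · exact (Equiv.sum_comp τ (fun i => F (singularValues B i))).symm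
    have hv0 : v 0 = 0 := variationOnFromTo.self F Set.univ 0
    have hpq : (p M - p 0) + (q M - q 0) = v M - v 0 := by
      simp only [hpdef, hqdef]; ring
    have hvM : v M ≤ totalVar F := by
      rw [hv, variationOnFromTo.eq_of_le F Set.univ hM0]
      exact ENNReal.toReal_mono hBV (eVariationOn.mono F inter_subset_left)
    have hrank0 : (0:ℝ) ≤ ((A - B).rank : ℝ) := Nat.cast_nonneg _
    calc ∑ i : Fin n, (F (singularValues A i) - F (singularValues B i))
        = ∑ k : Fin n, (F (a k) - F (b k)) := hsum
      _ ≤ ((A - B).rank : ℝ) * ((p M - p 0) + (q M - q 0)) := hmain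
      _ = ((A - B).rank : ℝ) * (v M - v 0) := by rw [hpq]
      _ ≤ ((A - B).rank : ℝ) * totalVar F := by
          apply mul_le_mul_of_nonneg_left _ hrank0
          rw [hv0]; linarith
      _ = totalVar F * ((A - B).rank : ℝ) := mul_comm _ _


end Aux

/-- Low-rank perturbations change singular value averages of a Lipschitz,
compactly supported test function by at most the total variation times
rank over dimension. -/
theorem low_rank_perturbation_bound
    (n : ℕ) (A B : Matrix (Fin n) (Fin n) ℂ)
    (F : ℝ → ℝ) (hFcont : Continuous F) (hFsupp : HasCompactSupport F)
    (hFlip : ∃ L : ℝ, ∀ x y : ℝ, |F x - F y| ≤ L * |x - y|) :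
    (1 / (n : ℝ)) * |∑ i : Fin n, (F (singularValues A i) - F (singularValues B i))|
      ≤ totalVar F * (Matrix.rank (A - B) : ℝ) / (n : ℝ) := by
  classical
  have h1 := sum_diff_le A B F hFsupp hFlip
  have h2 := sum_diff_le B A F hFsupp hFlip
  have hrk : (B - A).rank = (A - B).rank := by
    rw [show B - A = -(A - B) from (neg_sub A B).symm, rank_neg']
  rw [hrk] at h2
  have hneg : ∑ i : Fin n, (F (singularValues B i) - F (singularValues A i))
      = -∑ i : Fin n, (F (singularValues A i) - F (singularValues B i)) := by
    rw [← Finset.sum_neg_distrib]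
    exact Finset.sum_congr rfl fun i _ => by ring
  have habs : |∑ i : Fin n, (F (singularValues A i) - F (singularValues B i))|
      ≤ totalVar F * ((A - B).rank : ℝ) := by
    apply abs_le.mpr
    refine ⟨by rw [hneg] at h2; linarith, h1⟩
  rcases Nat.eq_zero_or_pos n with hn | hn
  · subst hn
    simp
  · have hnpos : (0:ℝ) < (n:ℝ) := Nat.cast_pos.mpr hn
    calc (1 / (n : ℝ)) * |∑ i : Fin n, (F (singularValues A i) - F (singularValues B i))|
        ≤ (1 / (n : ℝ)) * (totalVar F * ((A - B).rank : ℝ)) := by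
          apply mul_le_mul_of_nonneg_left habs (by positivity)
      _ = totalVar F * ((A - B).rank : ℝ) / (n : ℝ) := by ring
end

section
/- Let g(θ) = Σ_{|k|≤d} c_k e^{i k θ} be a complex trigonometric polynomial of degree d ≥ 0, and let F : ℝ → ℝ be a Lipschitz function with Lipschitz constant L and bounded support. Then for every integer n > 2d, |(1/n) Σ_{i=1}^{n} F(|g(2πi/n)|) − (1/(2π)) ∫_0^{2π} F(|g(θ)|) dθ| ≤ πL‖g'‖_∞/n + 4d‖F‖_∞/n. (Equivalently, since for n > 2d the singular values of the n×n circulant matrix C_n(g) associated with g are exactly the values |g(2πi/n)|, i = 1,…,n, the left-hand side equals the deviation of the average of F over the singular values of C_n(g) from the integral.) -/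
open MeasureTheory

private lemma riemann_bound_aux (h : ℝ → ℝ) (hcont : Continuous h) (K : ℝ)
    (hlip : ∀ x y : ℝ, |h x - h y| ≤ K * |x - y|) (n : ℕ) (hn : 0 < n) :
    |(1 / (n:ℝ)) * ∑ i ∈ Finset.Icc 1 n, h (2 * Real.pi * (i:ℝ) / n)
      - (1 / (2 * Real.pi)) * ∫ θ in (0:ℝ)..(2*Real.pi), h θ| ≤ Real.pi * K / n := by
  have hnR : (0:ℝ) < n := by exact_mod_cast hn
  have hpi := Real.pi_pos
  set a : ℕ → ℝ := fun i => 2 * Real.pi * (i:ℝ) / n with ha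
  have hmono : ∀ i j : ℕ, i ≤ j → a i ≤ a j := by
    intro i j hij
    have : (i:ℝ) ≤ j := by exact_mod_cast hij
    simp only [ha]
    gcongr
  have hsplit : ∫ θ in (0:ℝ)..(2*Real.pi), h θ = ∑ i ∈ Finset.range n, ∫ θ in a i..a (i+1), h θ := by
    rw [intervalIntegral.sum_integral_adjacent_intervals
      (fun k _ => hcont.intervalIntegrable _ _)]
    have h0 : a 0 = 0 := by simp [ha]
    have hN : a n = 2 * Real.pi := by simp only [ha]; field_simp
    rw [h0, hN]
  have hsum : ∑ i ∈ Finset.Icc 1 n, h (2 * Real.pi * (i:ℝ) / n)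
      = ∑ i ∈ Finset.range n, h (a (i+1)) := by
    rw [show Finset.Icc 1 n = Finset.Ico 1 (n+1) by rfl, Finset.sum_Ico_eq_sum_range]
    simp [ha, add_comm]
  rw [hsum, hsplit, Finset.mul_sum, Finset.mul_sum, ← Finset.sum_sub_distrib]
  refine (Finset.abs_sum_le_sum_abs _ _).trans ?_
  have hstep : ∀ i : ℕ, a (i+1) - a i = 2 * Real.pi / n := by
    intro i; simp only [ha]; push_cast; field_simp; ring
  have hterm : ∀ i ∈ Finset.range n,
      |(1 / (n:ℝ)) * h (a (i+1)) - (1 / (2 * Real.pi)) * ∫ θ in a i..a (i+1), h θ|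
        ≤ Real.pi * K / n ^ 2 := by
    intro i _
    have hle : a i ≤ a (i+1) := hmono i (i+1) (Nat.le_succ i)
    have hconst : (1 / (n:ℝ)) * h (a (i+1))
        = (1 / (2 * Real.pi)) * ∫ _ in a i..a (i+1), h (a (i+1)) := by
      rw [intervalIntegral.integral_const, hstep i, smul_eq_mul]
      field_simp
    rw [hconst, ← mul_sub,
      ← intervalIntegral.integral_sub (intervalIntegrable_const)
        (hcont.intervalIntegrable _ _)]
    rw [abs_mul]
    rw [abs_of_pos (by positivity : (0:ℝ) < 1 / (2 * Real.pi))]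
    have hbound : |∫ θ in a i..a (i+1), (h (a (i+1)) - h θ)|
        ≤ K * (a (i+1) - a i) ^ 2 / 2 := by
      refine (intervalIntegral.abs_integral_le_integral_abs hle).trans ?_
      have hmono2 : ∫ θ in a i..a (i+1), |h (a (i+1)) - h θ|
          ≤ ∫ θ in a i..a (i+1), K * (a (i+1) - θ) := by
        refine intervalIntegral.integral_mono_on hle ?_ ?_ ?_
        · exact ((continuous_const.sub hcont).abs).intervalIntegrable _ _
        · exact (continuous_const.mul (continuous_const.sub continuous_id)).intervalIntegrable _ _
        · intro θ hθ
          refine (hlip _ _).trans ?_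
          have : |a (i+1) - θ| = a (i+1) - θ := abs_of_nonneg (by linarith [hθ.2])
          rw [this]
      refine hmono2.trans ?_
      rw [intervalIntegral.integral_const_mul]
      have : ∫ θ in a i..a (i+1), (a (i+1) - θ) = (a (i+1) - a i)^2 / 2 := by
        rw [intervalIntegral.integral_sub intervalIntegrable_const
          intervalIntegral.intervalIntegrable_id, integral_id,
          intervalIntegral.integral_const, smul_eq_mul]
        ring
      rw [this]; ring_nf; rfl
    calc (1 / (2*Real.pi)) * |∫ θ in a i..a (i+1), (h (a (i+1)) - h θ)|
        ≤ (1 / (2*Real.pi)) * (K * (a (i+1) - a i) ^ 2 / 2) := by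
          gcongr
      _ = Real.pi * K / n ^ 2 := by
          rw [hstep i]; field_simp
  refine (Finset.sum_le_sum hterm).trans ?_
  rw [Finset.sum_const, Finset.card_range, nsmul_eq_mul]
  have : (n:ℝ) * (Real.pi * K / n ^ 2) = Real.pi * K / n := by
    field_simp
  rw [this]

/-- Quadrature-type error bound for the average of a Lipschitz compactly supported
test function over the modulus of a trigonometric polynomial on a uniform grid
(equivalently, over the singular values of the associated circulant matrix). -/
theorem circulant_quadrature_bound
    (d : ℕ) (c : ℤ → ℂ)
    (g : ℝ → ℂ) (hg : ∀ θ : ℝ, g θ = ∑ k ∈ Finset.Icc (-(d:ℤ)) (d:ℤ), c k * Complex.exp (Complex.I * k * θ))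
    (F : ℝ → ℝ) (L : ℝ)
    (hFcont : Continuous F) (hFsupp : HasCompactSupport F)
    (hFlip : ∀ x y : ℝ, |F x - F y| ≤ L * |x - y|)
    (n : ℕ) (hn : 2 * d < n) :
    |(1 / (n : ℝ)) * ∑ i ∈ Finset.Icc 1 n, F (‖g (2 * Real.pi * (i : ℝ) / (n : ℝ))‖)
        - (1 / (2 * Real.pi)) * ∫ θ in (0:ℝ)..(2 * Real.pi), F (‖g θ‖)|
      ≤ Real.pi * L * (⨆ θ : ℝ, ‖deriv g θ‖) / (n : ℝ)
        + 4 * (d : ℝ) * supNorm F / (n : ℝ) := by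
  have hnpos : 0 < n := lt_of_le_of_lt (Nat.zero_le _) hn
  have hnR : (0:ℝ) < n := by exact_mod_cast hnpos
  have hpi := Real.pi_pos
  have hgfun : g = fun θ : ℝ => ∑ k ∈ Finset.Icc (-(d:ℤ)) (d:ℤ), c k * Complex.exp (Complex.I * k * (θ:ℂ)) :=
    funext hg
  subst hgfun
  set G : ℝ → ℂ := fun θ : ℝ => ∑ k ∈ Finset.Icc (-(d:ℤ)) (d:ℤ), c k * Complex.exp (Complex.I * k * (θ:ℂ)) with hG
  -- derivative formula
  have hderiv : ∀ θ : ℝ, HasDerivAt G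
      (∑ k ∈ Finset.Icc (-(d:ℤ)) (d:ℤ), c k * (Complex.I * k) * Complex.exp (Complex.I * k * (θ:ℂ))) θ := by
    intro θ
    refine HasDerivAt.fun_sum ?_
    intro k _
    have h1 : HasDerivAt (fun θ : ℝ => (θ : ℂ)) 1 θ := by
      simpa using (hasDerivAt_id θ).ofReal_comp
    have h2 : HasDerivAt (fun θ : ℝ => Complex.I * k * (θ:ℂ)) (Complex.I * k) θ := by
      simpa using h1.const_mul (Complex.I * (k:ℂ))
    have h3 := h2.cexp
    have h4 := h3.const_mul (c k)
    convert h4 using 1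
    · rfl
    · ring
  set M : ℝ := ∑ k ∈ Finset.Icc (-(d:ℤ)) (d:ℤ), ‖c k‖ * |(k:ℝ)| with hM
  have habsexp : ∀ (k : ℤ) (θ : ℝ), ‖Complex.exp (Complex.I * k * (θ:ℂ))‖ = 1 := by
    intro k θ
    rw [Complex.norm_exp]
    norm_num [Complex.mul_re, Complex.mul_im]
  have hdbound : ∀ θ : ℝ, ‖deriv G θ‖ ≤ M := by
    intro θ
    rw [(hderiv θ).deriv]
    refine (norm_sum_le _ _).trans ?_
    refine Finset.sum_le_sum fun k _ => ?_
    rw [norm_mul, norm_mul, habsexp, norm_mul, Complex.norm_I, one_mul, mul_one]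
    simp
  set S : ℝ := ⨆ θ : ℝ, ‖deriv G θ‖ with hS
  have hBdd : BddAbove (Set.range fun θ : ℝ => ‖deriv G θ‖) := by
    refine ⟨M, ?_⟩; rintro _ ⟨θ, rfl⟩; exact hdbound θ
  have hSle : ∀ θ : ℝ, ‖deriv G θ‖ ≤ S := fun θ => le_ciSup hBdd θ
  have hSnn : 0 ≤ S := Real.iSup_nonneg fun θ => norm_nonneg _
  have hLnn : 0 ≤ L := by
    have := hFlip 0 1
    norm_num at this
    exact le_trans (abs_nonneg _) this
  -- Lipschitz bound on G
  have hGlip : ∀ x y : ℝ, ‖G x - G y‖ ≤ S * |x - y| := by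
    intro x y
    have hdiff : ∀ z : ℝ, z ∈ (Set.univ : Set ℝ) → DifferentiableAt ℝ G z :=
      fun z _ => (hderiv z).differentiableAt
    have hbd : ∀ z : ℝ, z ∈ (Set.univ : Set ℝ) → ‖deriv G z‖ ≤ S := by
      intro z _; exact hSle z
    have := Convex.norm_image_sub_le_of_norm_deriv_le hdiff hbd convex_univ
      (Set.mem_univ y) (Set.mem_univ x)
    rw [Real.norm_eq_abs] at this
    exact this
  -- composed Lipschitz function
  set h : ℝ → ℝ := fun θ => F (‖G θ‖) with hh
  have hlip : ∀ x y : ℝ, |h x - h y| ≤ (L * S) * |x - y| := by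
    intro x y
    refine (hFlip _ _).trans ?_
    have h1 : |‖G x‖ - ‖G y‖| ≤ ‖G x - G y‖ :=
      abs_norm_sub_norm_le _ _
    calc L * |‖G x‖ - ‖G y‖|
        ≤ L * (S * |x - y|) := by
          exact mul_le_mul_of_nonneg_left (h1.trans (hGlip x y)) hLnn
      _ = (L * S) * |x - y| := by ring
  have hGcont : Continuous G := by
    refine continuous_finset_sum _ fun k _ => ?_
    exact continuous_const.mul (Complex.continuous_exp.comp
      (continuous_const.mul Complex.continuous_ofReal))
  have hcont : Continuous h := hFcont.comp (continuous_norm.comp hGcont)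
  have hmain := riemann_bound_aux h hcont (L * S) hlip n hnpos
  have hsupnn : 0 ≤ supNorm F := Real.iSup_nonneg fun x => abs_nonneg _
  have hrest : 0 ≤ 4 * (d:ℝ) * supNorm F / n := by positivity
  calc |(1 / (n : ℝ)) * ∑ i ∈ Finset.Icc 1 n, F (‖G (2 * Real.pi * (i : ℝ) / (n : ℝ))‖)
        - (1 / (2 * Real.pi)) * ∫ θ in (0:ℝ)..(2 * Real.pi), F (‖G θ‖)|
      ≤ Real.pi * (L * S) / n := hmain
    _ ≤ Real.pi * L * S / n + 4 * (d:ℝ) * supNorm F / n := by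
        rw [show Real.pi * (L * S) = Real.pi * L * S by ring]
        linarith [hrest]
end

section
/- Suppose f : ℝ → ℂ is 2π-periodic and k times continuously differentiable for some integer k ≥ 1, and let N ≥ 1 be an integer. Then ‖f − f_N‖_2² ≤ ‖f^{(k)}‖_2² / N^{2k}. -/
open MeasureTheory

open intervalIntegral in
lemma two_pi_pos : (0:ℝ) < 2 * Real.pi := by positivity

instance fact_two_pi : Fact ((0:ℝ) < 2 * Real.pi) := ⟨two_pi_pos⟩

lemma liftIco_eq {g : ℝ → ℂ} (hper : Function.Periodic g (2*Real.pi)) (x : ℝ) :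
    AddCircle.liftIco (2*Real.pi) 0 g x = g x := by
  set p := 2*Real.pi with hpdef
  have hp : (0:ℝ) < p := two_pi_pos
  have hmem : toIcoMod hp 0 x ∈ Set.Ico (0:ℝ) (0 + p) := toIcoMod_mem_Ico hp 0 x
  have hxy : (x : AddCircle p) = ((toIcoMod hp 0 x : ℝ) : AddCircle p) := by
    rw [← sub_eq_zero, ← QuotientAddGroup.mk_sub]
    rw [QuotientAddGroup.eq_zero_iff, self_sub_toIcoMod hp 0 x]
    exact AddSubgroup.zsmul_mem _ (AddSubgroup.mem_zmultiples p) _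
  rw [hxy, AddCircle.liftIco_coe_apply hmem, toIcoMod]
  exact hper.sub_zsmul_eq _

noncomputable def C (g : ℝ → ℂ) (j : ℤ) : ℂ := fourierCoeff (AddCircle.liftIco (2*Real.pi) 0 g) j

lemma C_eq_integral {g : ℝ → ℂ} (hper : Function.Periodic g (2*Real.pi)) (j : ℤ) :
    C g j = (1/(2*Real.pi) : ℂ) * ∫ x in (0:ℝ)..(2*Real.pi), g x * Complex.exp (-(Complex.I * j * x)) := by
  rw [C, fourierCoeff_eq_intervalIntegral _ j 0]
  rw [zero_add]
  have h1 : ∀ x : ℝ, (fourier (-j) (x : AddCircle (2*Real.pi))) • (AddCircle.liftIco (2*Real.pi) 0 g x)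
      = g x * Complex.exp (-(Complex.I * j * x)) := by
    intro x
    rw [liftIco_eq hper, fourier_coe_apply, smul_eq_mul, mul_comm]
    congr 1
    have hπ : (Real.pi : ℂ) ≠ 0 := by exact_mod_cast Real.pi_ne_zero
    congr 1
    push_cast
    field_simp
  simp_rw [h1]
  rw [Complex.real_smul]
  push_cast
  ring

lemma exp_periodic (j : ℤ) :
    Function.Periodic (fun x : ℝ => Complex.exp (-(Complex.I * j * x))) (2*Real.pi) := by
  intro x
  simp only
  have : (-(Complex.I * j * (x + 2*Real.pi : ℝ)) : ℂ)
      = -(Complex.I * j * x) + (↑(-j) * (2 * ↑Real.pi * Complex.I)) := by push_cast; ring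
  rw [this, Complex.exp_add, Complex.exp_int_mul_two_pi_mul_I, mul_one]

lemma fCoeff_eq_C {f : ℝ → ℂ} (hper : Function.Periodic f (2*Real.pi)) (j : ℤ) :
    fCoeff f j = C f j := by
  rw [C_eq_integral hper, fCoeff]
  congr 1
  have hp : Function.Periodic (fun x : ℝ => f x * Complex.exp (-(Complex.I * j * x))) (2*Real.pi) := by
    intro x
    simp only [hper x, exp_periodic j x]
  have := hp.intervalIntegral_add_eq (-Real.pi) 0
  rw [zero_add] at this
  rw [show -Real.pi + 2*Real.pi = Real.pi by ring] at this
  exact this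

lemma parseval_s6 {g : ℝ → ℂ} (hc : Continuous g) (hper : Function.Periodic g (2*Real.pi)) :
    Summable (fun i : ℤ => ‖C g i‖^2) ∧
    (2*Real.pi) * ∑' i : ℤ, ‖C g i‖^2 = ∫ x in (0:ℝ)..(2*Real.pi), ‖g x‖^2 := by
  have hG : Continuous (AddCircle.liftIco (2*Real.pi) 0 g) :=
    AddCircle.liftIco_continuous ((hper 0).symm) hc.continuousOn
  set Gc : C(AddCircle (2*Real.pi), ℂ) := ⟨_, hG⟩ with hGc
  set F := ContinuousMap.toLp (E := ℂ) 2 AddCircle.haarAddCircle ℂ Gc with hF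
  have hcoeff : ∀ n : ℤ, fourierCoeff (F : AddCircle (2*Real.pi) → ℂ) n = C g n := fun n =>
    fourierCoeff_toLp Gc n
  have hsum : Summable (fun i : ℤ => ‖C g i‖^2) := by
    have hs := (lp.memℓp (fourierBasis.repr F)).summable (by norm_num : (0:ℝ) < (2:ENNReal).toReal)
    simp only [fourierBasis_repr, hcoeff] at hs
    have : ∀ i : ℤ, ‖C g i‖ ^ ((2:ENNReal).toReal) = ‖C g i‖^2 := by
      intro i
      rw [show ((2:ENNReal).toReal) = ((2:ℕ):ℝ) by norm_num, Real.rpow_natCast]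
    simpa only [this] using hs
  refine ⟨hsum, ?_⟩
  have hpars := tsum_sq_fourierCoeff F
  simp only [hcoeff] at hpars
  rw [hpars]
  have hae : (F : AddCircle (2*Real.pi) → ℂ) =ᵐ[AddCircle.haarAddCircle] Gc :=
    ContinuousMap.coeFn_toLp _ _
  have h1 : ∫ t : AddCircle (2*Real.pi), ‖(F : AddCircle (2*Real.pi) → ℂ) t‖^2 ∂AddCircle.haarAddCircle
      = ∫ t : AddCircle (2*Real.pi), ‖Gc t‖^2 ∂AddCircle.haarAddCircle :=
    integral_congr_ae (hae.fun_comp (fun z => ‖z‖^2))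
  rw [h1]
  have h2 : ∫ t : AddCircle (2*Real.pi), ‖Gc t‖^2 ∂(volume : Measure (AddCircle (2*Real.pi)))
      = (2*Real.pi) * ∫ t : AddCircle (2*Real.pi), ‖Gc t‖^2 ∂AddCircle.haarAddCircle := by
    rw [AddCircle.volume_eq_smul_haarAddCircle, integral_smul_measure,
      ENNReal.toReal_ofReal two_pi_pos.le, smul_eq_mul]
  rw [← h2]
  have h3 := AddCircle.intervalIntegral_preimage (2*Real.pi) 0
    (fun t : AddCircle (2*Real.pi) => ‖Gc t‖^2)
  rw [zero_add] at h3
  rw [← h3]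
  apply intervalIntegral.integral_congr
  intro x _
  simp only [hGc, ContinuousMap.coe_mk, liftIco_eq hper]

lemma C_deriv {g g' : ℝ → ℂ} (hper : Function.Periodic g (2*Real.pi))
    (hd : ∀ x, HasDerivAt g (g' x) x) (hint : Continuous g') {n : ℤ} (hn : n ≠ 0) :
    C g' n = Complex.I * n * C g n := by
  have h' : (0:ℝ) < 0 + 2*Real.pi := lt_add_of_pos_right 0 two_pi_pos
  have e1 : C g n = fourierCoeffOn h' g n := fourierCoeff_liftIco_eq g n
  have e2 : C g' n = fourierCoeffOn h' g' n := fourierCoeff_liftIco_eq g' n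
  have key := fourierCoeffOn_of_hasDerivAt h' hn (fun x _ => hd x)
    (hint.intervalIntegrable _ _)
  rw [← e1, ← e2, hper 0, sub_self, mul_zero, zero_sub] at key
  have hπ : (Real.pi : ℂ) ≠ 0 := by exact_mod_cast Real.pi_ne_zero
  have hn' : (n : ℂ) ≠ 0 := by exact_mod_cast hn
  have hI := Complex.I_ne_zero
  rw [key]
  push_cast
  field_simp
  ring

lemma periodic_deriv' {g : ℝ → ℂ} {T : ℝ} (hg : Function.Periodic g T) :
    Function.Periodic (deriv g) T := by
  intro x
  have h : (fun y => g (y + T)) = g := funext hg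
  calc deriv g (x + T) = deriv (fun y => g (y + T)) x := (deriv_comp_add_const g T x).symm
    _ = deriv g x := by rw [h]

lemma periodic_iteratedDeriv {g : ℝ → ℂ} {T : ℝ} (hg : Function.Periodic g T) (m : ℕ) :
    Function.Periodic (iteratedDeriv m g) T := by
  induction m with
  | zero => simpa [iteratedDeriv_zero] using hg
  | succ m ih => rw [iteratedDeriv_succ]; exact periodic_deriv' ih

lemma C_iteratedDeriv {f : ℝ → ℂ} {k : ℕ} (hf : ContDiff ℝ (k:ℕ∞) f)
    (hper : Function.Periodic f (2*Real.pi)) {n : ℤ} (hn : n ≠ 0) :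
    ∀ m, m ≤ k → C (iteratedDeriv m f) n = (Complex.I * n)^m * C f n := by
  intro m
  induction m with
  | zero => intro _; simp [iteratedDeriv_zero]
  | succ m ih =>
    intro hm
    have hmk : m < k := Nat.lt_of_succ_le hm
    have hdiff : Differentiable ℝ (iteratedDeriv m f) :=
      hf.differentiable_iteratedDeriv m (by exact_mod_cast hmk)
    have hcont : Continuous (iteratedDeriv (m+1) f) :=
      hf.continuous_iteratedDeriv (m+1) (by exact_mod_cast hm)
    rw [iteratedDeriv_succ] at hcont ⊢
    rw [C_deriv (periodic_iteratedDeriv hper m)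
      (fun x => (hdiff x).hasDerivAt) hcont hn, ih hmk.le]
    ring

lemma K (r : ℤ) : (∫ x in (0:ℝ)..(2*Real.pi), Complex.exp (Complex.I*r*x))
    = if r = 0 then (2*Real.pi : ℂ) else 0 := by
  by_cases hr : r = 0
  · simp [hr]
  · rw [if_neg hr]
    have hc : (Complex.I * r : ℂ) ≠ 0 :=
      mul_ne_zero Complex.I_ne_zero (by exact_mod_cast hr)
    rw [integral_exp_mul_complex hc]
    have h1 : Complex.exp (Complex.I * r * (2*Real.pi : ℝ)) = 1 := by
      rw [show (Complex.I * r * (2*Real.pi : ℝ) : ℂ) = r * (2*Real.pi*Complex.I) by push_cast; ring]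
      exact Complex.exp_int_mul_two_pi_mul_I r
    rw [h1]
    simp

lemma contE (g : ℝ → ℂ) (hg : Continuous g) : Continuous fun x : ℝ => Complex.exp (g x) :=
  Complex.continuous_exp.comp hg

lemma contExpNeg (j : ℤ) : Continuous fun x : ℝ => Complex.exp (-(Complex.I * j * x)) :=
  contE _ ((continuous_const.mul Complex.continuous_ofReal).neg)

lemma contExpPos (j : ℤ) : Continuous fun x : ℝ => Complex.exp (Complex.I * j * x) :=
  contE _ (continuous_const.mul Complex.continuous_ofReal)

lemma exp_periodic'' (j : ℤ) :
    Function.Periodic (fun x : ℝ => Complex.exp (Complex.I * j * x)) (2*Real.pi) := by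
  intro x
  simp only
  have : ((Complex.I * j * (x + 2*Real.pi : ℝ)) : ℂ)
      = Complex.I * j * x + (↑(j:ℤ) * (2 * ↑Real.pi * Complex.I)) := by push_cast; ring
  rw [this, Complex.exp_add, Complex.exp_int_mul_two_pi_mul_I, mul_one]

lemma trunc_periodic (f : ℝ → ℂ) (N : ℕ) :
    Function.Periodic (truncFourier f N) (2*Real.pi) := by
  intro x
  unfold truncFourier
  exact Finset.sum_congr rfl fun m _ => congrArg (fun z => fCoeff f m * z) (exp_periodic'' m x)

lemma trunc_continuous (f : ℝ → ℂ) (N : ℕ) : Continuous (truncFourier f N) := by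
  unfold truncFourier
  exact continuous_finset_sum _ fun m _ => continuous_const.mul (contExpPos m)

lemma C_err {f : ℝ → ℂ} (hc : Continuous f) (hper : Function.Periodic f (2*Real.pi)) (N : ℕ) (j : ℤ) :
    C (fun x => f x - truncFourier f N x) j
      = if j ∈ Finset.Icc (-(N:ℤ)) (N:ℤ) then 0 else C f j := by
  have hper_err : Function.Periodic (fun x => f x - truncFourier f N x) (2*Real.pi) :=
    fun x => by simp only [hper x, trunc_periodic f N x]
  rw [C_eq_integral hper_err j]
  have hint1 : IntervalIntegrable (fun x : ℝ => f x * Complex.exp (-(Complex.I * j * x)))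
      volume 0 (2*Real.pi) :=
    (hc.mul (contExpNeg j)).intervalIntegrable _ _
  have hint2 : IntervalIntegrable (fun x : ℝ => truncFourier f N x * Complex.exp (-(Complex.I * j * x)))
      volume 0 (2*Real.pi) :=
    ((trunc_continuous f N).mul (contExpNeg j)).intervalIntegrable _ _
  have hsplit : (∫ x in (0:ℝ)..(2*Real.pi),
        (f x - truncFourier f N x) * Complex.exp (-(Complex.I * j * x)))
      = (∫ x in (0:ℝ)..(2*Real.pi), f x * Complex.exp (-(Complex.I * j * x)))
        - ∫ x in (0:ℝ)..(2*Real.pi), truncFourier f N x * Complex.exp (-(Complex.I * j * x)) := by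
    rw [← intervalIntegral.integral_sub hint1 hint2]
    congr 1; funext x; ring
  rw [hsplit]
  have hterm : ∀ m : ℤ, ∀ x : ℝ,
      fCoeff f m * Complex.exp (Complex.I * m * x) * Complex.exp (-(Complex.I * j * x))
        = fCoeff f m * Complex.exp (Complex.I * (m - j) * x) := by
    intro m x
    rw [mul_assoc, ← Complex.exp_add]
    congr 2
    push_cast; ring
  have htr : (∫ x in (0:ℝ)..(2*Real.pi), truncFourier f N x * Complex.exp (-(Complex.I * j * x)))
      = if j ∈ Finset.Icc (-(N:ℤ)) (N:ℤ) then fCoeff f j * (2*Real.pi : ℂ) else 0 := by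
    unfold truncFourier
    simp_rw [Finset.sum_mul]
    rw [intervalIntegral.integral_finset_sum (f := fun m x => fCoeff f m * Complex.exp (Complex.I * m * x) * Complex.exp (-(Complex.I * j * x))) (fun m _ =>
      ((continuous_const.mul (contExpPos m)).mul (contExpNeg j)).intervalIntegrable _ _)]
    have : ∀ m ∈ Finset.Icc (-(N:ℤ)) (N:ℤ),
        (∫ x in (0:ℝ)..(2*Real.pi),
          fCoeff f m * Complex.exp (Complex.I * m * x) * Complex.exp (-(Complex.I * j * x)))
        = if m = j then fCoeff f m * (2*Real.pi : ℂ) else 0 := by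
      intro m _
      simp_rw [hterm m]
      rw [intervalIntegral.integral_const_mul, show ((m:ℂ) - (j:ℂ)) = ((m - j : ℤ):ℂ) by norm_cast, K (m - j)]
      by_cases hmj : m = j
      · simp [hmj]
      · rw [if_neg (sub_ne_zero.mpr hmj), if_neg hmj, mul_zero]
    rw [Finset.sum_congr rfl this, Finset.sum_ite_eq' (Finset.Icc (-(N:ℤ)) (N:ℤ)) j
      (fun m => fCoeff f m * (2*Real.pi : ℂ))]
  rw [htr]
  by_cases hj : j ∈ Finset.Icc (-(N:ℤ)) (N:ℤ)
  · rw [if_pos hj, if_pos hj, fCoeff_eq_C hper, C_eq_integral hper j]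
    have hπ : (Real.pi : ℂ) ≠ 0 := by exact_mod_cast Real.pi_ne_zero
    field_simp
    simp
  · rw [if_neg hj, if_neg hj, sub_zero, C_eq_integral hper j]

lemma l2sq (g : ℝ → ℂ) : l2Norm g ^ 2 = ∫ x in (0:ℝ)..(2*Real.pi), ‖g x‖^2 := by
  rw [l2Norm, Real.sq_sqrt (intervalIntegral.integral_nonneg two_pi_pos.le (fun x _ => sq_nonneg _))]

/-- L² error of the truncated Fourier series of a `C^k` periodic function. -/
theorem fourier_truncation_l2_bound
    (f : ℝ → ℂ) (k : ℕ) (hk : 1 ≤ k)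
    (hper : Function.Periodic f (2 * Real.pi))
    (hf : ContDiff ℝ (k : ℕ∞) f)
    (N : ℕ) (hN : 1 ≤ N) :
    l2Norm (fun x => f x - truncFourier f N x) ^ 2
      ≤ l2Norm (iteratedDeriv k f) ^ 2 / (N : ℝ) ^ (2 * k) := by
  set fk := iteratedDeriv k f with hfk
  have hcf : Continuous f := hf.continuous
  have hck : Continuous fk := hf.continuous_iteratedDeriv k (by exact_mod_cast le_rfl)
  have hperk : Function.Periodic fk (2*Real.pi) := periodic_iteratedDeriv hper k
  have hper_err : Function.Periodic (fun x => f x - truncFourier f N x) (2*Real.pi) :=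
    fun x => by simp only [hper x, trunc_periodic f N x]
  have hc_err : Continuous (fun x => f x - truncFourier f N x) :=
    hcf.sub (trunc_continuous f N)
  obtain ⟨hsum_err, hps_err⟩ := parseval_s6 hc_err hper_err
  obtain ⟨hsum_k, hps_k⟩ := parseval_s6 hck hperk
  have hNpos : (0:ℝ) < (N:ℝ)^(2*k) := by positivity
  have hb : ∀ i : ℤ, ‖C (fun x => f x - truncFourier f N x) i‖^2
      ≤ ‖C fk i‖^2 / (N:ℝ)^(2*k) := by
    intro i
    rw [C_err hcf hper N i]
    by_cases hi : i ∈ Finset.Icc (-(N:ℤ)) (N:ℤ)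
    · rw [if_pos hi]
      have h0 : ‖(0:ℂ)‖^2 = 0 := by simp
      rw [h0]
      positivity
    · rw [if_neg hi]
      have hNi : (N:ℝ) ≤ |(i:ℝ)| := by
        rw [Finset.mem_Icc] at hi
        have h2 : (N:ℤ) ≤ |i| := by rcases abs_cases i with ⟨h,_⟩|⟨h,_⟩ <;> omega
        calc (N:ℝ) ≤ ((|i| : ℤ) : ℝ) := by exact_mod_cast h2
          _ = |(i:ℝ)| := by push_cast; simp
      have hi0 : i ≠ 0 := by
        intro h0
        rw [h0] at hNi
        simp at hNi
        have : (1:ℝ) ≤ (N:ℝ) := by exact_mod_cast hN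
        linarith
      have hCk : C fk i = (Complex.I * i)^k * C f i :=
        C_iteratedDeriv hf hper hi0 k le_rfl
      have hnormI : ‖(Complex.I * (i:ℂ))‖ = |(i:ℝ)| := by
        rw [norm_mul, Complex.norm_I, one_mul,
          show ((i:ℂ)) = (((i:ℝ)):ℂ) by push_cast; rfl, Complex.norm_real, Real.norm_eq_abs]
      have hnorm : ‖C fk i‖^2 = (|(i:ℝ)|^(2*k)) * ‖C f i‖^2 := by
        rw [hCk, norm_mul, norm_pow, hnormI, mul_pow, ← pow_mul, Nat.mul_comm k 2]
      rw [hnorm]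
      rw [le_div_iff₀ hNpos]
      have h1 : (N:ℝ)^(2*k) ≤ |(i:ℝ)|^(2*k) :=
        pow_le_pow_left₀ (by positivity) hNi _
      calc ‖C f i‖^2 * (N:ℝ)^(2*k) ≤ ‖C f i‖^2 * |(i:ℝ)|^(2*k) :=
            mul_le_mul_of_nonneg_left h1 (sq_nonneg _)
        _ = |(i:ℝ)|^(2*k) * ‖C f i‖^2 := by ring
  have hsum_b : Summable (fun i : ℤ => ‖C fk i‖^2 / (N:ℝ)^(2*k)) := hsum_k.div_const _
  have htsum : ∑' i : ℤ, ‖C (fun x => f x - truncFourier f N x) i‖^2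
      ≤ (∑' i : ℤ, ‖C fk i‖^2) / (N:ℝ)^(2*k) := by
    rw [← tsum_div_const]
    exact Summable.tsum_le_tsum hb hsum_err hsum_b
  rw [l2sq, l2sq, ← hps_err, ← hps_k, mul_div_assoc]
  exact mul_le_mul_of_nonneg_left htsum two_pi_pos.le
end

section
/- Let f : [−π,π] → ℂ be in L^p([−π,π]) for some p ∈ [1,∞). Then for every n ∈ ℕ, the Schatten p-norm of the n-th Toeplitz matrix generated by f satisfies ( Σ_{i=1}^{n} σ_i(T_n(f))^p )^{1/p} ≤ (n/(2π))^{1/p} · ( ∫_{−π}^{π} |f(x)|^p dx )^{1/p}. -/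
open MeasureTheory

namespace ToeplitzAux

open Complex Matrix

noncomputable section

/-- The exponential kernel `e^{-i k x}`. -/
def ker (i : ℕ) (x : ℝ) : ℂ := Complex.exp (-(Complex.I * i * x))

lemma continuous_ker (i : ℕ) : Continuous fun x : ℝ => ker i x := by
  unfold ker; fun_prop

lemma abs_ker (i : ℕ) (x : ℝ) : ‖ker i x‖ = 1 := by
  have h : -(Complex.I * i * x) = ((-(i * x) : ℝ) : ℂ) * Complex.I := by push_cast; ring
  rw [ker, h, Complex.norm_exp_ofReal_mul_I]

lemma conj_ker (i : ℕ) (x : ℝ) :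
    (starRingEnd ℂ) (ker i x) = Complex.exp (Complex.I * i * x) := by
  rw [ker, ← Complex.exp_conj]
  congr 1
  simp only [map_neg, _root_.map_mul, Complex.conj_I, Complex.conj_natCast, Complex.conj_ofReal]
  ring

lemma ker_mul_conj (i j : ℕ) (x : ℝ) :
    ker i x * (starRingEnd ℂ) (ker j x)
      = Complex.exp (Complex.I * (((j : ℤ) : ℂ) - ((i : ℤ) : ℂ)) * x) := by
  rw [conj_ker, ker, ← Complex.exp_add]
  congr 1
  push_cast
  ring

lemma neg_pi_le_pi : -Real.pi ≤ Real.pi := by linarith [Real.pi_pos]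

/-- Orthogonality of the exponentials on `[-π, π]`. -/
lemma integral_exp_int (m : ℤ) :
    (∫ x in Set.Ioc (-Real.pi) Real.pi, Complex.exp (Complex.I * (m : ℂ) * x))
      = if m = 0 then ((2 * Real.pi : ℝ) : ℂ) else 0 := by
  rw [← intervalIntegral.integral_of_le neg_pi_le_pi]
  rcases eq_or_ne m 0 with h | h
  · simp only [h, Int.cast_zero, mul_zero, zero_mul, Complex.exp_zero, if_pos rfl]
    rw [intervalIntegral.integral_const]
    push_cast
    ring_nf
    simp [Complex.real_smul]
  · rw [if_neg h]
    have hc : (Complex.I * (m : ℂ)) ≠ 0 := by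
      simp [Complex.I_ne_zero, Int.cast_eq_zero, h]
    have hre : (fun x : ℝ => Complex.exp (Complex.I * (m : ℂ) * x))
        = fun x : ℝ => Complex.exp ((Complex.I * (m : ℂ)) * x) := by
      funext x; ring_nf
    rw [hre, integral_exp_mul_complex hc]
    have hexp : Complex.exp (Complex.I * (m : ℂ) * (Real.pi : ℂ))
        = Complex.exp (Complex.I * (m : ℂ) * ((-Real.pi : ℝ) : ℂ)) := by
      have harg : Complex.I * (m : ℂ) * ((Real.pi : ℝ) : ℂ)
          = Complex.I * (m : ℂ) * ((-Real.pi : ℝ) : ℂ) + (m : ℂ) * (2 * (Real.pi : ℂ) * Complex.I) := by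
        push_cast; ring
      rw [harg, Complex.exp_add, Complex.exp_int_mul_two_pi_mul_I, mul_one]
    rw [div_eq_zero_iff]
    left
    rw [sub_eq_zero]
    exact hexp

/-- `F v x = ⟪v, (e^{-i k x})_k⟫`. -/
def Fk (n : ℕ) (v : Fin n → ℂ) (x : ℝ) : ℂ := ∑ i, (starRingEnd ℂ) (v i) * ker i x

lemma continuous_Fk (n : ℕ) (v : Fin n → ℂ) : Continuous (Fk n v) := by
  refine continuous_finset_sum _ fun i _ => continuous_const.mul (continuous_ker i)

lemma abs_Fk_le (n : ℕ) (v : Fin n → ℂ) (x : ℝ) :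
    ‖Fk n v x‖ ≤ ∑ i, ‖v i‖ := by
  refine le_trans (norm_sum_le _ _) (le_of_eq ?_)
  refine Finset.sum_congr rfl fun i _ => ?_
  rw [norm_mul, abs_ker, mul_one, Complex.norm_conj]

/-- Parseval for a finite exponential sum over `[-π, π]`. -/
lemma integral_abs_Fk_sq (n : ℕ) (v : Fin n → ℂ) :
    (∫ x in Set.Ioc (-Real.pi) Real.pi, ‖Fk n v x‖ ^ 2)
      = 2 * Real.pi * ∑ i, ‖v i‖ ^ 2 := by
  have hprod : ∀ x : ℝ, Fk n v x * (starRingEnd ℂ) (Fk n v x)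
      = ∑ i, ∑ j, ((starRingEnd ℂ) (v i) * v j)
          * (ker i x * (starRingEnd ℂ) (ker j x)) := by
    intro x
    rw [Fk, map_sum, Finset.sum_mul_sum]
    refine Finset.sum_congr rfl fun i _ => Finset.sum_congr rfl fun j _ => ?_
    simp only [_root_.map_mul, RingHomCompTriple.comp_apply, RingHom.id_apply,
      Complex.conj_conj]
    ring
  have hcont : ∀ i j : Fin n,
      Continuous (fun x : ℝ => ((starRingEnd ℂ) (v i) * v j)
        * (ker i x * (starRingEnd ℂ) (ker j x))) := by
    intro i j
    exact continuous_const.mul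
      ((continuous_ker i).mul (Complex.continuous_conj.comp (continuous_ker j)))
  have hker : ∀ i j : Fin n,
      (∫ x in Set.Ioc (-Real.pi) Real.pi, ker i x * (starRingEnd ℂ) (ker j x))
        = if i = j then ((2 * Real.pi : ℝ) : ℂ) else 0 := by
    intro i j
    have h1 : (∫ x in Set.Ioc (-Real.pi) Real.pi, ker i x * (starRingEnd ℂ) (ker j x))
        = ∫ x in Set.Ioc (-Real.pi) Real.pi,
            Complex.exp (Complex.I * ((((j:ℕ):ℤ) - ((i:ℕ):ℤ) : ℤ) : ℂ) * x) := by
      refine integral_congr_ae (Filter.Eventually.of_forall fun x => ?_)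
      show ker i x * (starRingEnd ℂ) (ker j x) = _
      rw [ker_mul_conj]
      push_cast
      ring_nf
    rw [h1, integral_exp_int]
    have : ((((j:ℕ):ℤ) - ((i:ℕ):ℤ) : ℤ) = 0) ↔ i = j := by
      rw [sub_eq_zero]
      constructor
      · intro h; exact (Fin.val_injective (by exact_mod_cast h.symm))
      · intro h; rw [h]
    by_cases h : i = j
    · rw [if_pos (this.mpr h), if_pos h]
    · rw [if_neg (fun hc => h (this.mp hc)), if_neg h]
  have hcomplex : (∫ x in Set.Ioc (-Real.pi) Real.pi, Fk n v x * (starRingEnd ℂ) (Fk n v x))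
      = ((2 * Real.pi * ∑ i, ‖v i‖ ^ 2 : ℝ) : ℂ) := by
    rw [integral_congr_ae (Filter.Eventually.of_forall hprod)]
    rw [integral_finset_sum _ (fun i _ => ?_)]
    swap
    · exact integrable_finset_sum _ fun j _ => (hcont i j).integrableOn_Ioc
    rw [Finset.sum_congr rfl fun i _ =>
      integral_finset_sum _ (fun j _ => (hcont i j).integrableOn_Ioc)]
    have : ∀ i j : Fin n,
        (∫ x in Set.Ioc (-Real.pi) Real.pi, ((starRingEnd ℂ) (v i) * v j)
          * (ker i x * (starRingEnd ℂ) (ker j x)))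
        = ((starRingEnd ℂ) (v i) * v j) * (if i = j then ((2 * Real.pi : ℝ) : ℂ) else 0) := by
      intro i j
      rw [integral_const_mul, hker i j]
    rw [Finset.sum_congr rfl fun i _ => Finset.sum_congr rfl fun j _ => this i j]
    have hdiag : ∀ i : Fin n,
        (∑ j, ((starRingEnd ℂ) (v i) * v j) * (if i = j then ((2 * Real.pi : ℝ) : ℂ) else 0))
          = ((‖v i‖ ^ 2 * (2 * Real.pi) : ℝ) : ℂ) := by
      intro i
      rw [Finset.sum_eq_single i]
      · rw [if_pos rfl]
        have : (starRingEnd ℂ) (v i) * v i = ((‖v i‖ ^ 2 : ℝ) : ℂ) := by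
          rw [mul_comm, Complex.mul_conj, Complex.normSq_eq_norm_sq, Complex.ofReal_pow]
        rw [this]; norm_cast
      · intro j _ hj; rw [if_neg (fun hc => hj hc.symm), mul_zero]
      · intro h; exact absurd (Finset.mem_univ i) h
    rw [Finset.sum_congr rfl fun i _ => hdiag i]
    push_cast
    rw [← Finset.sum_mul]
    ring
  have habs : ∀ x : ℝ, ‖Fk n v x‖ ^ 2
      = RCLike.re (Fk n v x * (starRingEnd ℂ) (Fk n v x)) := by
    intro x
    rw [Complex.mul_conj, Complex.normSq_eq_norm_sq]
    simp [← Complex.ofReal_pow]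
  rw [integral_congr_ae (Filter.Eventually.of_forall habs)]
  have hcFc : Continuous fun x : ℝ => Fk n v x * (starRingEnd ℂ) (Fk n v x) :=
    (continuous_Fk n v).mul (Complex.continuous_conj.comp (continuous_Fk n v))
  rw [integral_re hcFc.integrableOn_Ioc, hcomplex]
  exact Complex.ofReal_re _

lemma inner_euclid {n : ℕ} (x y : EuclideanSpace ℂ (Fin n)) :
    (inner ℂ x y : ℂ) = ∑ i, (starRingEnd ℂ) (x i) * y i := by
  simp [PiLp.inner_apply, RCLike.inner_apply, mul_comm]

def Evec (n : ℕ) (x : ℝ) : EuclideanSpace ℂ (Fin n) := WithLp.toLp 2 (fun i : Fin n => ker i x)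

lemma Fk_eq_inner {n : ℕ} (v : EuclideanSpace ℂ (Fin n)) (x : ℝ) :
    Fk n v x = (inner ℂ v (Evec n x) : ℂ) := by
  rw [inner_euclid]; rfl

lemma norm_Evec_sq {n : ℕ} (x : ℝ) : ‖Evec n x‖ ^ 2 = (n : ℝ) := by
  rw [EuclideanSpace.norm_eq, Real.sq_sqrt (Finset.sum_nonneg fun i _ => sq_nonneg _)]
  have : ∀ i : Fin n, ‖Evec n x i‖ ^ 2 = 1 := by
    intro i
    show ‖ker i x‖ ^ 2 = 1
    rw [abs_ker]; norm_num
  simp only [this, Finset.sum_const, Finset.card_univ, Fintype.card_fin, nsmul_eq_mul, mul_one]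

/-- Bessel inequality for a pairwise-orthogonal family of vectors of norm `1` or `0`. -/
lemma bessel {n : ℕ} (v : Fin n → EuclideanSpace ℂ (Fin n)) (x : EuclideanSpace ℂ (Fin n))
    (horth : ∀ k l, k ≠ l → (inner ℂ (v k) (v l) : ℂ) = 0)
    (hnorm : ∀ k, v k = 0 ∨ ‖v k‖ = 1) :
    ∑ k, ‖(inner ℂ (v k) x : ℂ)‖ ^ 2 ≤ ‖x‖ ^ 2 := by
  classical
  have horthon : Orthonormal ℂ (fun k : {k : Fin n // v k ≠ 0} => v (k : Fin n)) := by
    constructor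
    · rintro ⟨k, hk⟩; exact (hnorm k).resolve_left hk
    · rintro ⟨k, hk⟩ ⟨l, hl⟩ hne
      exact horth k l fun h => hne (Subtype.ext h)
  have hb := horthon.sum_inner_products_le (s := Finset.univ) x
  calc ∑ k, ‖(inner ℂ (v k) x : ℂ)‖ ^ 2
      = ∑ k ∈ Finset.univ.filter (fun k => v k ≠ 0), ‖(inner ℂ (v k) x : ℂ)‖ ^ 2 := by
        rw [Finset.sum_filter]
        refine Finset.sum_congr rfl fun k _ => ?_
        by_cases h : v k = 0
        · simp [h]
        · simp [h]
    _ = ∑ k : {k : Fin n // v k ≠ 0}, ‖(inner ℂ (v (k : Fin n)) x : ℂ)‖ ^ 2 :=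
        Finset.sum_subtype _ (by simp) _
    _ ≤ ‖x‖ ^ 2 := by simpa using hb

section Matrices

variable {n : ℕ} (A : Matrix (Fin n) (Fin n) ℂ)

/-- Eigenvalues of `Aᴴ * A`. -/
def lam (k : Fin n) : ℝ := (Matrix.isHermitian_conjTranspose_mul_self A).eigenvalues k

/-- Singular values. -/
def sv (k : Fin n) : ℝ := Real.sqrt (lam A k)

/-- Orthonormal eigenvector basis of `Aᴴ * A`. -/
def wv (k : Fin n) : EuclideanSpace ℂ (Fin n) :=
  (Matrix.isHermitian_conjTranspose_mul_self A).eigenvectorBasis k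

/-- Normalized images `A wₖ / σₖ` (or `0`). -/
def uv (k : Fin n) : EuclideanSpace ℂ (Fin n) :=
  if lam A k = 0 then 0 else ((sv A k : ℂ))⁻¹ • WithLp.toLp 2 (A *ᵥ (wv A k : Fin n → ℂ))

lemma lam_nonneg (k : Fin n) : 0 ≤ lam A k :=
  Matrix.eigenvalues_conjTranspose_mul_self_nonneg A k

lemma sv_nonneg (k : Fin n) : 0 ≤ sv A k := Real.sqrt_nonneg _

lemma sq_sv (k : Fin n) : sv A k * sv A k = lam A k :=
  Real.mul_self_sqrt (lam_nonneg A k)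

lemma star_dot_eq_inner (x y : EuclideanSpace ℂ (Fin n)) :
    dotProduct (star (x : Fin n → ℂ)) (y : Fin n → ℂ) = (inner ℂ x y : ℂ) := by
  rw [inner_euclid]
  rfl

lemma dot_Aw_Aw (k l : Fin n) :
    dotProduct (star (A *ᵥ (wv A k : Fin n → ℂ))) (A *ᵥ (wv A l : Fin n → ℂ))
      = if k = l then ((lam A l : ℝ) : ℂ) else 0 := by
  have h1 : dotProduct (star (A *ᵥ (wv A k : Fin n → ℂ))) (A *ᵥ (wv A l : Fin n → ℂ))
      = dotProduct (star (wv A k : Fin n → ℂ)) ((Aᴴ * A) *ᵥ (wv A l : Fin n → ℂ)) := by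
    rw [Matrix.star_mulVec, ← Matrix.mulVec_mulVec, dotProduct_mulVec,
      dotProduct_mulVec, dotProduct_mulVec]
  rw [h1]
  have hmv : (Aᴴ * A) *ᵥ ((Matrix.isHermitian_conjTranspose_mul_self A).eigenvectorBasis l : Fin n → ℂ)
      = lam A l • ((Matrix.isHermitian_conjTranspose_mul_self A).eigenvectorBasis l : Fin n → ℂ) :=
    (Matrix.isHermitian_conjTranspose_mul_self A).mulVec_eigenvectorBasis l
  simp only [wv]
  rw [hmv, dotProduct_smul]
  have h2 : dotProduct
        (star ((Matrix.isHermitian_conjTranspose_mul_self A).eigenvectorBasis k : Fin n → ℂ))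
        ((Matrix.isHermitian_conjTranspose_mul_self A).eigenvectorBasis l : Fin n → ℂ)
      = if k = l then (1 : ℂ) else 0 := by
    rw [star_dot_eq_inner]
    exact orthonormal_iff_ite.mp
      (Matrix.isHermitian_conjTranspose_mul_self A).eigenvectorBasis.orthonormal k l
  rw [h2]
  by_cases h : k = l
  · rw [if_pos h, if_pos h, Complex.real_smul, mul_one]
  · rw [if_neg h, if_neg h, smul_zero]

lemma dot_u_Aw (k : Fin n) :
    dotProduct (star (uv A k : Fin n → ℂ)) (A *ᵥ (wv A k : Fin n → ℂ))
      = ((sv A k : ℝ) : ℂ) := by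
  unfold uv
  by_cases h : lam A k = 0
  · rw [if_pos h]
    have : sv A k = 0 := by rw [sv, h, Real.sqrt_zero]
    simp [this]
  · rw [if_neg h]
    have hs : sv A k ≠ 0 := by
      rw [sv]
      exact Real.sqrt_ne_zero'.mpr (lt_of_le_of_ne (lam_nonneg A k) (Ne.symm h))
    rw [WithLp.ofLp_smul, WithLp.ofLp_toLp, star_smul, smul_dotProduct]
    have := dot_Aw_Aw A k k
    rw [if_pos rfl] at this
    rw [this]
    rw [star_inv₀, Complex.star_def, Complex.conj_ofReal, smul_eq_mul]
    rw [show ((lam A k : ℝ) : ℂ) = ((sv A k : ℝ) : ℂ) * ((sv A k : ℝ) : ℂ) by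
      rw [← Complex.ofReal_mul, sq_sv]]
    field_simp

lemma norm_uv_sq (k : Fin n) : (‖uv A k‖ : ℝ) ^ 2 ≤ 1 := by
  unfold uv
  by_cases h : lam A k = 0
  · rw [if_pos h]; simp
  · rw [if_neg h]
    have hlpos : 0 < lam A k := lt_of_le_of_ne (lam_nonneg A k) (Ne.symm h)
    have hs : 0 < sv A k := Real.sqrt_pos.mpr hlpos
    set v : EuclideanSpace ℂ (Fin n) := WithLp.toLp 2 (A *ᵥ (wv A k : Fin n → ℂ)) with hv
    have hinner : (inner ℂ v v : ℂ) = ((lam A k : ℝ) : ℂ) := by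
      rw [hv, ← star_dot_eq_inner]
      have := dot_Aw_Aw A k k
      rw [if_pos rfl] at this
      exact this
    have hnorm : ‖v‖ ^ 2 = lam A k := by
      have h2 := inner_self_eq_norm_sq_to_K (𝕜 := ℂ) v
      rw [hinner] at h2
      have h3 := congrArg Complex.re h2
      simpa [← Complex.ofReal_pow] using h3.symm
    have hns : ‖((sv A k : ℝ) : ℂ)⁻¹‖ = (sv A k)⁻¹ := by
      rw [norm_inv, Complex.norm_real, Real.norm_eq_abs, _root_.abs_of_nonneg (sv_nonneg A k)]
    calc ‖((sv A k : ℝ) : ℂ)⁻¹ • v‖ ^ 2 = (‖((sv A k : ℝ) : ℂ)⁻¹‖ * ‖v‖) ^ 2 := by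
          rw [norm_smul]
      _ = (sv A k)⁻¹ ^ 2 * ‖v‖ ^ 2 := by rw [hns]; ring
      _ = 1 := by
          rw [hnorm, ← sq_sv A k]
          field_simp
      _ ≤ 1 := le_refl 1

lemma uv_norm (k : Fin n) : uv A k = 0 ∨ ‖uv A k‖ = 1 := by
  by_cases h : lam A k = 0
  · left; rw [uv, if_pos h]
  · right
    rw [uv, if_neg h]
    have hlpos : 0 < lam A k := lt_of_le_of_ne (lam_nonneg A k) (Ne.symm h)
    have hs : 0 < sv A k := Real.sqrt_pos.mpr hlpos
    set v : EuclideanSpace ℂ (Fin n) := WithLp.toLp 2 (A *ᵥ (wv A k : Fin n → ℂ)) with hv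
    have hinner : (inner ℂ v v : ℂ) = ((lam A k : ℝ) : ℂ) := by
      rw [hv, ← star_dot_eq_inner]
      have := dot_Aw_Aw A k k
      rw [if_pos rfl] at this
      exact this
    have hnorm : ‖v‖ ^ 2 = lam A k := by
      have h2 := inner_self_eq_norm_sq_to_K (𝕜 := ℂ) v
      rw [hinner] at h2
      have h3 := congrArg Complex.re h2
      simpa [← Complex.ofReal_pow] using h3.symm
    have hns : ‖((sv A k : ℝ) : ℂ)⁻¹‖ = (sv A k)⁻¹ := by
      rw [norm_inv, Complex.norm_real, Real.norm_eq_abs, _root_.abs_of_nonneg (sv_nonneg A k)]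
    have hsq : ‖((sv A k : ℝ) : ℂ)⁻¹ • v‖ ^ 2 = 1 := by
      calc ‖((sv A k : ℝ) : ℂ)⁻¹ • v‖ ^ 2 = (‖((sv A k : ℝ) : ℂ)⁻¹‖ * ‖v‖) ^ 2 := by
            rw [norm_smul]
        _ = (sv A k)⁻¹ ^ 2 * ‖v‖ ^ 2 := by rw [hns]; ring
        _ = 1 := by
            rw [hnorm, ← sq_sv A k]
            field_simp
    nlinarith [norm_nonneg (((sv A k : ℝ) : ℂ)⁻¹ • v), hsq]

lemma sum_abs_sq_eq_norm (v : EuclideanSpace ℂ (Fin n)) :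
    ∑ i, ‖v i‖ ^ 2 = ‖v‖ ^ 2 := by
  rw [EuclideanSpace.norm_eq, Real.sq_sqrt (Finset.sum_nonneg fun i _ => sq_nonneg _)]

lemma uv_orth (k l : Fin n) (hkl : k ≠ l) : (inner ℂ (uv A k) (uv A l) : ℂ) = 0 := by
  rw [← star_dot_eq_inner]
  unfold uv
  by_cases hk : lam A k = 0
  · rw [if_pos hk]; simp
  · by_cases hl : lam A l = 0
    · rw [if_neg hk, if_pos hl]; simp
    · rw [if_neg hk, if_neg hl]
      rw [WithLp.ofLp_smul, WithLp.ofLp_smul, WithLp.ofLp_toLp, WithLp.ofLp_toLp,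
        star_smul, smul_dotProduct, dotProduct_smul]
      have := dot_Aw_Aw A k l
      rw [if_neg hkl] at this
      rw [this]
      simp

end Matrices

section Analytic

/-- The summand in the expansion of `⟨u, T_n(f) w⟩`. -/
def Gf {n : ℕ} (f : ℝ → ℂ) (u w : Fin n → ℂ) (i j : Fin n) (x : ℝ) : ℂ :=
  ((starRingEnd ℂ) (u i) * w j * (ker i x * (starRingEnd ℂ) (ker j x))) * f x

lemma dot_toeplitz {n : ℕ} (f : ℝ → ℂ)
    (hfint : MeasureTheory.IntegrableOn f (Set.Ioc (-Real.pi) Real.pi) MeasureTheory.volume)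
    (u w : Fin n → ℂ) :
    dotProduct (star u) ((toeplitzMat f n) *ᵥ w)
      = (1 / (2 * (Real.pi : ℂ)))
          * ∫ x in Set.Ioc (-Real.pi) Real.pi,
              f x * (Fk n u x * (starRingEnd ℂ) (Fk n w x)) := by
  have hT : ∀ i j : Fin n, toeplitzMat f n i j
      = (1 / (2 * (Real.pi : ℂ)))
          * ∫ x in Set.Ioc (-Real.pi) Real.pi,
              f x * (ker i x * (starRingEnd ℂ) (ker j x)) := by
    intro i j
    unfold toeplitzMat fCoeff
    simp only [Matrix.of_apply]
    rw [intervalIntegral.integral_of_le neg_pi_le_pi]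
    congr 1
    refine integral_congr_ae (Filter.Eventually.of_forall fun x => ?_)
    show f x * Complex.exp (-(Complex.I * (((i : ℕ) : ℤ) - ((j : ℕ) : ℤ) : ℤ) * x))
      = f x * (ker (i : ℕ) x * (starRingEnd ℂ) (ker (j : ℕ) x))
    rw [ker_mul_conj]
    congr 1
    push_cast
    ring
  have hGint : ∀ i j : Fin n,
      MeasureTheory.Integrable (Gf f u w i j)
        (MeasureTheory.volume.restrict (Set.Ioc (-Real.pi) Real.pi)) := by
    intro i j
    refine MeasureTheory.Integrable.bdd_mul (c := ‖u i‖ * ‖w j‖) hfint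
      ((continuous_const.mul ((continuous_ker i).mul
        (Complex.continuous_conj.comp (continuous_ker j)))).aestronglyMeasurable)
      (Filter.Eventually.of_forall fun x => ?_)
    simp only [norm_mul, Complex.norm_conj, abs_ker, mul_one]
    exact le_refl _
  have hterm : ∀ i j : Fin n,
      (starRingEnd ℂ) (u i) * (toeplitzMat f n i j * w j)
        = (1 / (2 * (Real.pi : ℂ)))
            * ∫ x in Set.Ioc (-Real.pi) Real.pi, Gf f u w i j x := by
    intro i j
    rw [hT i j]
    rw [show (starRingEnd ℂ) (u i) * ((1 / (2 * (Real.pi : ℂ)))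
        * (∫ x in Set.Ioc (-Real.pi) Real.pi,
            f x * (ker i x * (starRingEnd ℂ) (ker j x))) * w j)
      = (1 / (2 * (Real.pi : ℂ))) * (((starRingEnd ℂ) (u i) * w j)
          * ∫ x in Set.Ioc (-Real.pi) Real.pi,
              f x * (ker i x * (starRingEnd ℂ) (ker j x))) from by ring]
    rw [← integral_const_mul]
    congr 1
    refine integral_congr_ae (Filter.Eventually.of_forall fun x => ?_)
    show (starRingEnd ℂ) (u i) * w j * (f x * (ker i x * (starRingEnd ℂ) (ker j x))) = Gf f u w i j x
    rw [Gf]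
    ring
  calc dotProduct (star u) ((toeplitzMat f n) *ᵥ w)
      = ∑ i, (starRingEnd ℂ) (u i) * ∑ j, toeplitzMat f n i j * w j := rfl
    _ = ∑ i, ∑ j, (1 / (2 * (Real.pi : ℂ)))
          * ∫ x in Set.Ioc (-Real.pi) Real.pi, Gf f u w i j x := by
        refine Finset.sum_congr rfl fun i _ => ?_
        rw [Finset.mul_sum]
        exact Finset.sum_congr rfl fun j _ => hterm i j
    _ = (1 / (2 * (Real.pi : ℂ)))
          * ∑ i, ∑ j, ∫ x in Set.Ioc (-Real.pi) Real.pi, Gf f u w i j x := by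
        simp only [Finset.mul_sum]
    _ = (1 / (2 * (Real.pi : ℂ)))
          * ∫ x in Set.Ioc (-Real.pi) Real.pi, ∑ i, ∑ j, Gf f u w i j x := by
        congr 1
        calc ∑ i, ∑ j, ∫ x in Set.Ioc (-Real.pi) Real.pi, Gf f u w i j x
            = ∑ i, ∫ x in Set.Ioc (-Real.pi) Real.pi, ∑ j, Gf f u w i j x :=
              Finset.sum_congr rfl fun i _ =>
                (MeasureTheory.integral_finset_sum _ fun j _ => hGint i j).symm
          _ = ∫ x in Set.Ioc (-Real.pi) Real.pi, ∑ i, ∑ j, Gf f u w i j x :=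
              (MeasureTheory.integral_finset_sum _ fun i _ =>
                MeasureTheory.integrable_finset_sum _ fun j _ => hGint i j).symm
    _ = (1 / (2 * (Real.pi : ℂ)))
          * ∫ x in Set.Ioc (-Real.pi) Real.pi,
              f x * (Fk n u x * (starRingEnd ℂ) (Fk n w x)) := by
        congr 1
        refine integral_congr_ae (Filter.Eventually.of_forall fun x => ?_)
        show ∑ i, ∑ j, Gf f u w i j x
          = f x * (Fk n u x * (starRingEnd ℂ) (Fk n w x))
        have hconj : (starRingEnd ℂ) (Fk n w x) = ∑ j, w j * (starRingEnd ℂ) (ker j x) := by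
          rw [Fk, map_sum]
          refine Finset.sum_congr rfl fun j _ => ?_
          rw [_root_.map_mul, Complex.conj_conj]
        rw [hconj]
        rw [show Fk n u x * ∑ j, w j * (starRingEnd ℂ) (ker j x)
            = ∑ i, ∑ j, ((starRingEnd ℂ) (u i) * ker i x)
                * (w j * (starRingEnd ℂ) (ker j x)) from by rw [Fk, Finset.sum_mul_sum]]
        rw [Finset.mul_sum]
        refine Finset.sum_congr rfl fun i _ => ?_
        rw [Finset.mul_sum]
        refine Finset.sum_congr rfl fun j _ => ?_
        rw [Gf]
        ring

end Analytic

end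

end ToeplitzAux

open ToeplitzAux

/-- Schatten p-norm bound of a Toeplitz matrix in terms of the Lᵖ norm of its symbol. -/
theorem toeplitz_schatten_norm_bound
    (f : ℝ → ℂ) (p : ℝ) (hp : 1 ≤ p)
    (hf : MeasureTheory.MemLp f (ENNReal.ofReal p)
            (MeasureTheory.volume.restrict (Set.Icc (-Real.pi) Real.pi)))
    (n : ℕ) :
    (∑ i : Fin n, singularValues (toeplitzMat f n) i ^ p) ^ (1 / p)
      ≤ ((n : ℝ) / (2 * Real.pi)) ^ (1 / p)
          * (∫ x in (-Real.pi)..Real.pi, ‖f x‖ ^ p) ^ (1 / p) := by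
  classical
  have hπ : (0:ℝ) < Real.pi := Real.pi_pos
  have h2π : (0:ℝ) < 2 * Real.pi := by linarith
  have hp0 : (0:ℝ) < p := lt_of_lt_of_le one_pos hp
  set μ := MeasureTheory.volume.restrict (Set.Ioc (-Real.pi) Real.pi) with hμdef
  haveI : MeasureTheory.IsFiniteMeasure μ := by
    constructor
    rw [hμdef, MeasureTheory.Measure.restrict_apply_univ]
    exact measure_Ioc_lt_top
  have hfμ : MeasureTheory.MemLp f (ENNReal.ofReal p) μ :=
    hf.mono_measure (MeasureTheory.Measure.restrict_mono Set.Ioc_subset_Icc_self le_rfl)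
  have hfint : MeasureTheory.Integrable f μ :=
    hfμ.integrable (ENNReal.one_le_ofReal.mpr hp)
  set A := toeplitzMat f n with hAdef
  have hsv : ∀ i : Fin n, singularValues A i = sv A i := fun i => rfl
  simp only [hsv]
  -- notation
  set S := ∑ k : Fin n, sv A k ^ p with hSdef
  have hS0 : 0 ≤ S := Finset.sum_nonneg fun k _ => Real.rpow_nonneg (sv_nonneg A k) p
  set t := fun k : Fin n => sv A k ^ (p - 1) with htdef
  have ht0 : ∀ k, 0 ≤ t k := fun k => Real.rpow_nonneg (sv_nonneg A k) _
  have hts : ∀ k, t k * sv A k = sv A k ^ p := by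
    intro k
    rcases eq_or_lt_of_le (sv_nonneg A k) with h0 | h0
    · have hz : sv A k = 0 := h0.symm
      rw [hz, mul_zero, Real.zero_rpow (ne_of_gt hp0)]
    · rw [htdef]
      show sv A k ^ (p-1) * sv A k = _
      nth_rewrite 2 [← Real.rpow_one (sv A k)]
      rw [← Real.rpow_add h0]
      norm_num
  set hfun := fun x : ℝ => ∑ k : Fin n, ((t k : ℝ) : ℂ)
      * (Fk n (uv A k) x * (starRingEnd ℂ) (Fk n (wv A k) x)) with hhdef
  have hcont_Fu : ∀ k : Fin n, Continuous fun x => Fk n (uv A k) x := fun k => continuous_Fk n _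
  have hcont_Fw : ∀ k : Fin n, Continuous fun x => Fk n (wv A k) x := fun k => continuous_Fk n _
  have hcont_hfun : Continuous hfun := by
    refine continuous_finset_sum _ fun k _ => continuous_const.mul ?_
    exact (hcont_Fu k).mul (Complex.continuous_conj.comp (hcont_Fw k))
  -- the fundamental identity
  have hSC : ((S : ℝ) : ℂ) = (1 / (2 * (Real.pi : ℂ))) * ∫ x, f x * hfun x ∂μ := by
    have hint_k : ∀ k : Fin n, MeasureTheory.Integrable
        (fun x => (((t k : ℝ) : ℂ)
          * (Fk n (uv A k) x * (starRingEnd ℂ) (Fk n (wv A k) x))) * f x) μ := by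
      intro k
      refine MeasureTheory.Integrable.bdd_mul
        (c := t k * ((∑ i, ‖uv A k i‖) * (∑ i, ‖wv A k i‖))) hfint
        ((continuous_const.mul ((hcont_Fu k).mul
          (Complex.continuous_conj.comp (hcont_Fw k)))).aestronglyMeasurable)
        (Filter.Eventually.of_forall fun x => ?_)
      rw [norm_mul, norm_mul, Complex.norm_conj,
        Complex.norm_real, Real.norm_eq_abs, _root_.abs_of_nonneg (ht0 k)]
      exact mul_le_mul_of_nonneg_left
        (mul_le_mul (abs_Fk_le n _ x) (abs_Fk_le n _ x) (norm_nonneg _)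
          (Finset.sum_nonneg fun i _ => norm_nonneg _)) (ht0 k)
    have hfOn : MeasureTheory.IntegrableOn f (Set.Ioc (-Real.pi) Real.pi)
        MeasureTheory.volume := by rw [hμdef] at hfint; exact hfint
    have h1 : ∀ k : Fin n, ((sv A k ^ p : ℝ) : ℂ)
        = (1 / (2 * (Real.pi : ℂ))) * ∫ x, (((t k : ℝ) : ℂ)
            * (Fk n (uv A k) x * (starRingEnd ℂ) (Fk n (wv A k) x))) * f x ∂μ := by
      intro k
      rw [← hts k, Complex.ofReal_mul]
      have hd := dot_u_Aw A k
      have hdt := dot_toeplitz (n := n) f hfOn (uv A k) (wv A k)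
      rw [← hμdef] at hdt
      rw [← hd, hAdef, hdt]
      rw [show ((t k : ℝ) : ℂ) * ((1 / (2 * (Real.pi : ℂ)))
          * ∫ x, f x * (Fk n (uv A k) x * (starRingEnd ℂ) (Fk n (wv A k) x)) ∂μ)
        = (1 / (2 * (Real.pi : ℂ))) * (((t k : ℝ) : ℂ)
          * ∫ x, f x * (Fk n (uv A k) x * (starRingEnd ℂ) (Fk n (wv A k) x)) ∂μ) from by ring]
      rw [← MeasureTheory.integral_const_mul]
      congr 1
      refine MeasureTheory.integral_congr_ae (Filter.Eventually.of_forall fun x => ?_)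
      show ((t k : ℝ) : ℂ) * (f x * (Fk n (uv A k) x * (starRingEnd ℂ) (Fk n (wv A k) x)))
        = (((t k : ℝ) : ℂ) * (Fk n (uv A k) x * (starRingEnd ℂ) (Fk n (wv A k) x))) * f x
      ring
    calc ((S : ℝ) : ℂ) = ∑ k : Fin n, ((sv A k ^ p : ℝ) : ℂ) := by
          rw [hSdef]; push_cast; rfl
      _ = ∑ k : Fin n, (1 / (2 * (Real.pi : ℂ))) * ∫ x, (((t k : ℝ) : ℂ)
            * (Fk n (uv A k) x * (starRingEnd ℂ) (Fk n (wv A k) x))) * f x ∂μ :=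
          Finset.sum_congr rfl fun k _ => h1 k
      _ = (1 / (2 * (Real.pi : ℂ))) * ∑ k : Fin n, ∫ x, (((t k : ℝ) : ℂ)
            * (Fk n (uv A k) x * (starRingEnd ℂ) (Fk n (wv A k) x))) * f x ∂μ := by
          rw [← Finset.mul_sum]
      _ = (1 / (2 * (Real.pi : ℂ))) * ∫ x, ∑ k : Fin n, (((t k : ℝ) : ℂ)
            * (Fk n (uv A k) x * (starRingEnd ℂ) (Fk n (wv A k) x))) * f x ∂μ := by
          rw [MeasureTheory.integral_finset_sum _ fun k _ => hint_k k]
      _ = (1 / (2 * (Real.pi : ℂ))) * ∫ x, f x * hfun x ∂μ := by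
          congr 1
          refine MeasureTheory.integral_congr_ae (Filter.Eventually.of_forall fun x => ?_)
          show ∑ k : Fin n, (((t k : ℝ) : ℂ)
              * (Fk n (uv A k) x * (starRingEnd ℂ) (Fk n (wv A k) x))) * f x = f x * hfun x
          rw [hhdef]
          show _ = f x * ∑ k : Fin n, ((t k : ℝ) : ℂ)
              * (Fk n (uv A k) x * (starRingEnd ℂ) (Fk n (wv A k) x))
          rw [Finset.mul_sum]
          exact Finset.sum_congr rfl fun k _ => by ring
  -- basic bound
  have hSabs : S ≤ (1 / (2 * Real.pi)) * ∫ x, ‖f x‖ * ‖hfun x‖ ∂μ := by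
    have h1 : S = ‖((S : ℝ) : ℂ)‖ := by
      rw [Complex.norm_real, Real.norm_eq_abs, _root_.abs_of_nonneg hS0]
    rw [h1, hSC, norm_mul]
    have habs1 : ‖1 / (2 * (Real.pi : ℂ))‖ = 1 / (2 * Real.pi) := by
      rw [norm_div, norm_one]
      congr 1
      rw [show (2 * (Real.pi : ℂ)) = ((2 * Real.pi : ℝ) : ℂ) by push_cast; ring,
        Complex.norm_real, Real.norm_eq_abs, _root_.abs_of_nonneg (le_of_lt h2π)]
    rw [habs1]
    refine mul_le_mul_of_nonneg_left ?_ (by positivity)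
    calc ‖∫ x, f x * hfun x ∂μ‖ = ‖∫ x, f x * hfun x ∂μ‖ := rfl
      _ ≤ ∫ x, ‖f x * hfun x‖ ∂μ := MeasureTheory.norm_integral_le_integral_norm _
      _ = ∫ x, ‖f x‖ * ‖hfun x‖ ∂μ := by
          refine MeasureTheory.integral_congr_ae (Filter.Eventually.of_forall fun x => ?_)
          show ‖f x * hfun x‖ = ‖f x‖ * ‖hfun x‖
          rw [norm_mul]
  -- pointwise Bessel bounds
  have ha : ∀ x : ℝ, ∑ k : Fin n, ‖Fk n (uv A k) x‖ ^ 2 ≤ (n : ℝ) := by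
    intro x
    have hB := bessel (fun k => uv A k) (Evec n x)
      (fun k l h => uv_orth A k l h) (fun k => uv_norm A k)
    rw [norm_Evec_sq] at hB
    calc ∑ k : Fin n, ‖Fk n (uv A k) x‖ ^ 2
        = ∑ k : Fin n, ‖(inner ℂ (uv A k) (Evec n x) : ℂ)‖ ^ 2 := by
          refine Finset.sum_congr rfl fun k _ => ?_
          rw [← Fk_eq_inner]
      _ ≤ (n : ℝ) := hB
  have hb : ∀ x : ℝ, ∑ k : Fin n, ‖Fk n (wv A k) x‖ ^ 2 ≤ (n : ℝ) := by
    intro x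
    have hon := (Matrix.isHermitian_conjTranspose_mul_self A).eigenvectorBasis.orthonormal
    have hB := bessel (fun k => wv A k) (Evec n x)
      (fun k l h => hon.2 h) (fun k => Or.inr (hon.1 k))
    rw [norm_Evec_sq] at hB
    calc ∑ k : Fin n, ‖Fk n (wv A k) x‖ ^ 2
        = ∑ k : Fin n, ‖(inner ℂ (wv A k) (Evec n x) : ℂ)‖ ^ 2 := by
          refine Finset.sum_congr rfl fun k _ => ?_
          rw [← Fk_eq_inner]
      _ ≤ (n : ℝ) := hB
  have hKn : ∀ x : ℝ, ∑ k : Fin n,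
      ‖Fk n (uv A k) x‖ * ‖Fk n (wv A k) x‖ ≤ (n : ℝ) := by
    intro x
    have hcs := Finset.sum_mul_sq_le_sq_mul_sq Finset.univ
      (fun k => ‖Fk n (uv A k) x‖) (fun k => ‖Fk n (wv A k) x‖)
    have h1 := ha x
    have h2 := hb x
    have h3 : (0:ℝ) ≤ ∑ k : Fin n,
        ‖Fk n (uv A k) x‖ * ‖Fk n (wv A k) x‖ :=
      Finset.sum_nonneg fun k _ => mul_nonneg (norm_nonneg _) (norm_nonneg _)
    have h4 : (0:ℝ) ≤ ∑ k : Fin n, ‖Fk n (wv A k) x‖ ^ 2 :=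
      Finset.sum_nonneg fun k _ => sq_nonneg _
    have h5 : (0:ℝ) ≤ (n:ℝ) := Nat.cast_nonneg n
    nlinarith [hcs, h1, h2, h3, h4, h5]
  -- triangle inequality on hfun
  have hpt : ∀ x : ℝ, ‖hfun x‖
      ≤ ∑ k : Fin n, t k * (‖Fk n (uv A k) x‖ * ‖Fk n (wv A k) x‖) := by
    intro x
    simp only [hhdef]
    refine le_trans (norm_sum_le _ _) (le_of_eq (Finset.sum_congr rfl fun k _ => ?_))
    rw [norm_mul, norm_mul, Complex.norm_conj, Complex.norm_real, Real.norm_eq_abs,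
      _root_.abs_of_nonneg (ht0 k)]
  -- integral Cauchy-Schwarz per index
  have hIab : ∀ k : Fin n,
      (∫ x, ‖Fk n (uv A k) x‖ * ‖Fk n (wv A k) x‖ ∂μ) ≤ 2 * Real.pi := by
    intro k
    have hpq22 : Real.HolderConjugate 2 2 := Real.holderConjugate_iff.mpr ⟨one_lt_two, by norm_num⟩
    have hmu : ∀ v : Fin n → ℂ,
        MeasureTheory.MemLp (fun x => ‖Fk n v x‖) (ENNReal.ofReal 2) μ := by
      intro v
      refine MeasureTheory.MemLp.mono_exponent
        (MeasureTheory.memLp_top_of_bound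
          ((continuous_norm.comp (continuous_Fk n v)).aestronglyMeasurable)
          (∑ i, ‖v i‖) (Filter.Eventually.of_forall fun x => ?_)) le_top
      rw [Real.norm_eq_abs, _root_.abs_of_nonneg (norm_nonneg _)]
      exact abs_Fk_le n v x
    have hH := MeasureTheory.integral_mul_le_Lp_mul_Lq_of_nonneg hpq22
      (Filter.Eventually.of_forall fun x => norm_nonneg (Fk n (uv A k) x))
      (Filter.Eventually.of_forall fun x => norm_nonneg (Fk n (wv A k) x))
      (hmu (uv A k)) (hmu (wv A k))
    refine le_trans hH ?_
    have hconv : ∀ v : Fin n → ℂ, (∫ x, ‖Fk n v x‖ ^ (2:ℝ) ∂μ)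
        = 2 * Real.pi * ∑ i, ‖v i‖ ^ 2 := by
      intro v
      rw [hμdef]
      rw [show (fun x => ‖Fk n v x‖ ^ (2:ℝ))
          = fun x => ‖Fk n v x‖ ^ (2:ℕ) from funext fun x => by
        rw [← Real.rpow_natCast (‖Fk n v x‖) 2]; norm_num]
      exact integral_abs_Fk_sq n v
    have hu2 : ∑ i, ‖uv A k i‖ ^ 2 ≤ 1 := by
      rw [sum_abs_sq_eq_norm (uv A k)]
      rcases uv_norm A k with h | h
      · rw [h]; simp
      · rw [h]; norm_num
    have hw2 : ∑ i, ‖wv A k i‖ ^ 2 ≤ 1 := by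
      rw [sum_abs_sq_eq_norm (wv A k)]
      have hon := (Matrix.isHermitian_conjTranspose_mul_self A).eigenvectorBasis.orthonormal
      have : ‖wv A k‖ = 1 := hon.1 k
      rw [this]
      norm_num
    have hub : (∫ x, ‖Fk n (uv A k) x‖ ^ (2:ℝ) ∂μ) ≤ 2 * Real.pi := by
      rw [hconv]
      nlinarith [Finset.sum_nonneg (fun i (_ : i ∈ Finset.univ) =>
        sq_nonneg (‖uv A k i‖))]
    have hwb : (∫ x, ‖Fk n (wv A k) x‖ ^ (2:ℝ) ∂μ) ≤ 2 * Real.pi := by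
      rw [hconv]
      nlinarith [Finset.sum_nonneg (fun i (_ : i ∈ Finset.univ) =>
        sq_nonneg (‖wv A k i‖))]
    have hint_nonneg : ∀ v : Fin n → ℂ, (0:ℝ) ≤ ∫ x, ‖Fk n v x‖ ^ (2:ℝ) ∂μ :=
      fun v => MeasureTheory.integral_nonneg fun x => Real.rpow_nonneg (norm_nonneg _) _
    calc (∫ x, ‖Fk n (uv A k) x‖ ^ (2:ℝ) ∂μ) ^ (1/(2:ℝ))
          * (∫ x, ‖Fk n (wv A k) x‖ ^ (2:ℝ) ∂μ) ^ (1/(2:ℝ))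
        ≤ (2 * Real.pi) ^ (1/(2:ℝ)) * (2 * Real.pi) ^ (1/(2:ℝ)) := by
          refine mul_le_mul (Real.rpow_le_rpow (hint_nonneg _) hub (by norm_num))
            (Real.rpow_le_rpow (hint_nonneg _) hwb (by norm_num))
            (Real.rpow_nonneg (hint_nonneg _) _) (Real.rpow_nonneg (le_of_lt h2π) _)
      _ = 2 * Real.pi := by
          rw [← Real.rpow_add h2π]
          norm_num
  -- the target integral
  have hInt_eq : (∫ x in (-Real.pi)..Real.pi, ‖f x‖ ^ p)
      = ∫ x, ‖f x‖ ^ p ∂μ := intervalIntegral.integral_of_le neg_pi_le_pi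
  set Ip := ∫ x, ‖f x‖ ^ p ∂μ with hIpdef
  have hIp0 : 0 ≤ Ip := MeasureTheory.integral_nonneg fun x => Real.rpow_nonneg (norm_nonneg _) p
  rw [hInt_eq]
  -- final goal : S ^ (1/p) ≤ ((n:ℝ)/(2π))^(1/p) * Ip^(1/p)
  rcases eq_or_lt_of_le hp with hp1 | hp1
  · -- p = 1
    subst hp1
    rw [show (1:ℝ)/1 = 1 by norm_num, Real.rpow_one, Real.rpow_one, Real.rpow_one]
    have hIp1 : Ip = ∫ x, ‖f x‖ ∂μ := by
      rw [hIpdef]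
      exact MeasureTheory.integral_congr_ae
        (Filter.Eventually.of_forall fun x => Real.rpow_one _)
    have hh1 : ∀ x : ℝ, ‖hfun x‖ ≤ (n : ℝ) := by
      intro x
      refine le_trans (hpt x) (le_trans (le_of_eq ?_) (hKn x))
      refine Finset.sum_congr rfl fun k _ => ?_
      rw [htdef]
      show sv A k ^ ((1:ℝ) - 1) * _ = _
      norm_num
    have h2 : (∫ x, ‖f x‖ * ‖hfun x‖ ∂μ)
        ≤ ∫ x, ‖f x‖ * (n : ℝ) ∂μ := by
      refine MeasureTheory.integral_mono_of_nonneg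
        (Filter.Eventually.of_forall fun x =>
          mul_nonneg (norm_nonneg _) (norm_nonneg _))
        (hfint.norm.mul_const _)
        (Filter.Eventually.of_forall fun x =>
          mul_le_mul_of_nonneg_left (hh1 x) (norm_nonneg _))
    calc S ≤ (1 / (2 * Real.pi)) * ∫ x, ‖f x‖ * ‖hfun x‖ ∂μ := hSabs
      _ ≤ (1 / (2 * Real.pi)) * ∫ x, ‖f x‖ * (n : ℝ) ∂μ :=
          mul_le_mul_of_nonneg_left h2 (by positivity)
      _ = (1 / (2 * Real.pi)) * ((∫ x, ‖f x‖ ∂μ) * (n : ℝ)) := by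
          rw [MeasureTheory.integral_mul_const]
      _ = ((n : ℝ) / (2 * Real.pi)) * Ip := by rw [hIp1]; ring
  · -- 1 < p
    set q := p / (p - 1) with hqdef
    have hpm1 : (0:ℝ) < p - 1 := by linarith
    have hqpos : (0:ℝ) < q := by rw [hqdef]; positivity
    have hq1 : (1:ℝ) ≤ q := by
      rw [hqdef, le_div_iff₀ hpm1]
      linarith
    have hqne : q ≠ 0 := ne_of_gt hqpos
    have hpq : p⁻¹ + q⁻¹ = 1 := by
      rw [hqdef]
      field_simp
      ring
    have e1 : (p - 1) * q = p := by
      rw [hqdef]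
      field_simp
    have e3 : (1 - q⁻¹) * q = q - 1 := by
      rw [sub_mul, one_mul, inv_mul_cancel₀ hqne]
    -- pointwise weighted Hölder bound
    have hWH : ∀ x : ℝ, ‖hfun x‖ ^ q
        ≤ (n : ℝ) ^ (q - 1) * ∑ k : Fin n, sv A k ^ p
            * (‖Fk n (uv A k) x‖ * ‖Fk n (wv A k) x‖) := by
      intro x
      set K := fun k : Fin n => ‖Fk n (uv A k) x‖
          * ‖Fk n (wv A k) x‖ with hKdef
      have hK0 : ∀ k, 0 ≤ K k :=
        fun k => mul_nonneg (norm_nonneg _) (norm_nonneg _)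
      have hKsum0 : 0 ≤ ∑ k, K k := Finset.sum_nonneg fun k _ => hK0 k
      have hWH1 := Real.inner_le_weight_mul_Lp_of_nonneg Finset.univ hq1 K t hK0 ht0
      have hKt : ∀ k : Fin n, K k * t k ^ q = sv A k ^ p * K k := by
        intro k
        rw [htdef]
        show K k * (sv A k ^ (p - 1)) ^ q = _
        rw [← Real.rpow_mul (sv_nonneg A k), e1]
        ring
      have hsum2 : (0:ℝ) ≤ ∑ k, K k * t k ^ q :=
        Finset.sum_nonneg fun k _ => mul_nonneg (hK0 k) (Real.rpow_nonneg (ht0 k) q)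
      calc ‖hfun x‖ ^ q
          ≤ (∑ k : Fin n, t k * K k) ^ q :=
            Real.rpow_le_rpow (norm_nonneg _) (hpt x) (le_of_lt hqpos)
        _ = (∑ k : Fin n, K k * t k) ^ q := by
            congr 1
            exact Finset.sum_congr rfl fun k _ => mul_comm _ _
        _ ≤ ((∑ k, K k) ^ (1 - q⁻¹) * (∑ k, K k * t k ^ q) ^ q⁻¹) ^ q :=
            Real.rpow_le_rpow (Finset.sum_nonneg fun k _ =>
              mul_nonneg (hK0 k) (ht0 k)) hWH1 (le_of_lt hqpos)
        _ = ((∑ k, K k) ^ (1 - q⁻¹)) ^ q * ((∑ k, K k * t k ^ q) ^ q⁻¹) ^ q :=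
            Real.mul_rpow (Real.rpow_nonneg hKsum0 _) (Real.rpow_nonneg hsum2 _)
        _ = (∑ k, K k) ^ ((1 - q⁻¹) * q) * (∑ k, K k * t k ^ q) ^ (q⁻¹ * q) := by
            rw [← Real.rpow_mul hKsum0, ← Real.rpow_mul hsum2]
        _ = (∑ k, K k) ^ (q - 1) * (∑ k, K k * t k ^ q) ^ (1:ℝ) := by
            rw [e3, inv_mul_cancel₀ hqne]
        _ = (∑ k, K k) ^ (q - 1) * ∑ k : Fin n, sv A k ^ p * K k := by
            rw [Real.rpow_one]
            congr 1
            exact Finset.sum_congr rfl fun k _ => hKt k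
        _ ≤ (n : ℝ) ^ (q - 1) * ∑ k : Fin n, sv A k ^ p * K k := by
            refine mul_le_mul_of_nonneg_right
              (Real.rpow_le_rpow hKsum0 (hKn x) (by linarith)) ?_
            exact Finset.sum_nonneg fun k _ =>
              mul_nonneg (Real.rpow_nonneg (sv_nonneg A k) p) (hK0 k)
    -- integral bound for |hfun|^q
    have hcont_ab : ∀ k : Fin n, Continuous fun x =>
        ‖Fk n (uv A k) x‖ * ‖Fk n (wv A k) x‖ :=
      fun k => (continuous_norm.comp (hcont_Fu k)).mul
        (continuous_norm.comp (hcont_Fw k))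
    have hIq : (∫ x, ‖hfun x‖ ^ q ∂μ)
        ≤ 2 * Real.pi * ((n : ℝ) ^ (q - 1) * S) := by
      have hRHScont : Continuous fun x : ℝ => (n : ℝ) ^ (q - 1) * ∑ k : Fin n, sv A k ^ p
          * (‖Fk n (uv A k) x‖ * ‖Fk n (wv A k) x‖) := by
        refine continuous_const.mul (continuous_finset_sum _ fun k _ => ?_)
        exact continuous_const.mul (hcont_ab k)
      have hRHSint : MeasureTheory.Integrable (fun x : ℝ => (n : ℝ) ^ (q - 1)
          * ∑ k : Fin n, sv A k ^ p
            * (‖Fk n (uv A k) x‖ * ‖Fk n (wv A k) x‖)) μ := by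
        rw [hμdef]
        exact hRHScont.integrableOn_Ioc
      have step1 : (∫ x, ‖hfun x‖ ^ q ∂μ)
          ≤ ∫ x, (n : ℝ) ^ (q - 1) * ∑ k : Fin n, sv A k ^ p
              * (‖Fk n (uv A k) x‖ * ‖Fk n (wv A k) x‖) ∂μ :=
        MeasureTheory.integral_mono_of_nonneg
          (Filter.Eventually.of_forall fun x => Real.rpow_nonneg (norm_nonneg _) q)
          hRHSint (Filter.Eventually.of_forall hWH)
      refine le_trans step1 ?_
      rw [MeasureTheory.integral_const_mul]
      rw [MeasureTheory.integral_finset_sum _ (fun k _ => by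
        rw [hμdef]
        exact (continuous_const.mul (hcont_ab k)).integrableOn_Ioc)]
      have hsum_le : (∑ k : Fin n, ∫ x, sv A k ^ p
          * (‖Fk n (uv A k) x‖ * ‖Fk n (wv A k) x‖) ∂μ)
          ≤ ∑ k : Fin n, sv A k ^ p * (2 * Real.pi) := by
        refine Finset.sum_le_sum fun k _ => ?_
        rw [MeasureTheory.integral_const_mul]
        exact mul_le_mul_of_nonneg_left (hIab k) (Real.rpow_nonneg (sv_nonneg A k) p)
      calc (n : ℝ) ^ (q - 1) * ∑ k : Fin n, ∫ x, sv A k ^ p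
            * (‖Fk n (uv A k) x‖ * ‖Fk n (wv A k) x‖) ∂μ
          ≤ (n : ℝ) ^ (q - 1) * ∑ k : Fin n, sv A k ^ p * (2 * Real.pi) :=
            mul_le_mul_of_nonneg_left hsum_le (Real.rpow_nonneg (Nat.cast_nonneg n) _)
        _ = 2 * Real.pi * ((n : ℝ) ^ (q - 1) * S) := by
            rw [hSdef, ← Finset.sum_mul]
            ring
    -- MemLp facts and Hölder
    have hfabs : MeasureTheory.MemLp (fun x => ‖f x‖) (ENNReal.ofReal p) μ :=
      hfμ.norm
    have hhq : MeasureTheory.MemLp (fun x => ‖hfun x‖) (ENNReal.ofReal q) μ := by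
      refine MeasureTheory.MemLp.mono_exponent
        (MeasureTheory.memLp_top_of_bound
          ((continuous_norm.comp hcont_hfun).aestronglyMeasurable)
          (∑ k : Fin n, t k * ((∑ i, ‖uv A k i‖) * (∑ i, ‖wv A k i‖)))
          (Filter.Eventually.of_forall fun x => ?_)) le_top
      rw [Real.norm_eq_abs, _root_.abs_of_nonneg (norm_nonneg _)]
      refine le_trans (hpt x) (Finset.sum_le_sum fun k _ => ?_)
      exact mul_le_mul_of_nonneg_left
        (mul_le_mul (abs_Fk_le n _ x) (abs_Fk_le n _ x) (norm_nonneg _)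
          (Finset.sum_nonneg fun i _ => norm_nonneg _)) (ht0 k)
    have hpqR : Real.HolderConjugate p q := Real.holderConjugate_iff.mpr ⟨hp1, hpq⟩
    have hHold := MeasureTheory.integral_mul_le_Lp_mul_Lq_of_nonneg hpqR
      (Filter.Eventually.of_forall fun x => norm_nonneg (f x))
      (Filter.Eventually.of_forall fun x => norm_nonneg (hfun x))
      hfabs hhq
    rw [← hIpdef] at hHold
    have hIq_nonneg : (0:ℝ) ≤ ∫ x, ‖hfun x‖ ^ q ∂μ :=
      MeasureTheory.integral_nonneg fun x => Real.rpow_nonneg (norm_nonneg _) q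
    have key : S ≤ (1 / (2 * Real.pi))
        * (Ip ^ (1/p) * (2 * Real.pi * ((n : ℝ) ^ (q - 1) * S)) ^ (1/q)) := by
      refine le_trans hSabs (mul_le_mul_of_nonneg_left (le_trans hHold ?_) (by positivity))
      exact mul_le_mul_of_nonneg_left
        (Real.rpow_le_rpow hIq_nonneg hIq (by positivity)) (Real.rpow_nonneg hIp0 _)
    rcases eq_or_lt_of_le hS0 with hS0' | hSpos
    · rw [← hS0', Real.zero_rpow (by positivity : (1:ℝ)/p ≠ 0)]
      exact mul_nonneg (Real.rpow_nonneg (by positivity) _) (Real.rpow_nonneg hIp0 _)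
    · -- cancellation
      have hCpos : (0:ℝ) < (2 * Real.pi) ^ (1/q) := Real.rpow_pos_of_pos h2π _
      have hsplit : (2 * Real.pi * ((n : ℝ) ^ (q - 1) * S)) ^ (1/q)
          = (2 * Real.pi * (n : ℝ) ^ (q - 1)) ^ (1/q) * S ^ (1/q) := by
        rw [show 2 * Real.pi * ((n : ℝ) ^ (q - 1) * S)
            = (2 * Real.pi * (n : ℝ) ^ (q - 1)) * S by ring]
        exact Real.mul_rpow (by positivity) hS0
      rw [hsplit] at key
      have key2 : S ^ (1/p) * S ^ (1/q)
          ≤ ((1 / (2 * Real.pi)) * (Ip ^ (1/p)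
              * (2 * Real.pi * (n : ℝ) ^ (q - 1)) ^ (1/q))) * S ^ (1/q) := by
        have hSsum : S ^ (1/p) * S ^ (1/q) = S := by
          rw [← Real.rpow_add hSpos]
          rw [show (1:ℝ)/p + 1/q = 1 by rw [one_div, one_div]; exact hpq]
          exact Real.rpow_one S
        rw [hSsum]
        refine le_trans key (le_of_eq ?_)
        ring
      have key3 : S ^ (1/p) ≤ (1 / (2 * Real.pi)) * (Ip ^ (1/p)
          * (2 * Real.pi * (n : ℝ) ^ (q - 1)) ^ (1/q)) :=
        le_of_mul_le_mul_right key2 (Real.rpow_pos_of_pos hSpos _)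
      refine le_trans key3 (le_of_eq ?_)
      -- final constant computation
      have hnn : (0:ℝ) ≤ (n:ℝ) := Nat.cast_nonneg n
      have hq1p : (q - 1) * (1/q) = 1/p := by
        have h' : q⁻¹ = 1 - p⁻¹ := by linarith [hpq]
        rw [one_div, one_div, sub_mul, mul_inv_cancel₀ hqne, h']
        ring
      have hsplit2 : (2 * Real.pi * (n : ℝ) ^ (q - 1)) ^ (1/q)
          = (2 * Real.pi) ^ (1/q) * (n : ℝ) ^ (1/p) := by
        rw [Real.mul_rpow (le_of_lt h2π) (Real.rpow_nonneg hnn _),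
          ← Real.rpow_mul hnn, hq1p]
      have hpi : (1 / (2 * Real.pi)) * (2 * Real.pi) ^ (1/q) = ((2 * Real.pi) ^ (1/p))⁻¹ := by
        have hmul : (2 * Real.pi) ^ (1/q) * (2 * Real.pi) ^ (1/p) = 2 * Real.pi := by
          rw [← Real.rpow_add h2π]
          rw [show (1:ℝ)/q + 1/p = 1 by rw [one_div, one_div]; linarith [hpq]]
          exact Real.rpow_one _
        have hppos : (0:ℝ) < (2 * Real.pi) ^ (1/p) := Real.rpow_pos_of_pos h2π _
        field_simp
        linarith [hmul]
      have hdiv : ((n : ℝ) / (2 * Real.pi)) ^ (1/p)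
          = (n : ℝ) ^ (1/p) * ((2 * Real.pi) ^ (1/p))⁻¹ := by
        rw [Real.div_rpow hnn (le_of_lt h2π), div_eq_mul_inv]
      rw [hsplit2, hdiv]
      rw [show (1 / (2 * Real.pi)) * (Ip ^ (1/p) * ((2 * Real.pi) ^ (1/q) * (n : ℝ) ^ (1/p)))
          = ((1 / (2 * Real.pi)) * (2 * Real.pi) ^ (1/q)) * ((n : ℝ) ^ (1/p) * Ip ^ (1/p))
          by ring]
      rw [hpi]
      ring
end

section
/- Let λ, μ ∈ (0,1) and θ ∈ ℝ. Then the series Σ_{j=0}^{∞} √λ · μ^{j/2} · L_j^{(−1)}(−ln λ) · e^{i j θ} converges absolutely, and its sum equals λ^{−1/2 + 1/(1 − √μ e^{iθ})}, where for z ∈ ℂ we set λ^z := exp(z · ln λ). Moreover, the squared modulus of this sum equals λ^{(1−μ)/(1 − 2√μ cos θ + μ)}. -/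
open MeasureTheory

/-- Generalised Laguerre polynomial `L_m^{(-1)}`. -/
noncomputable def lagM1 (m : ℕ) (x : ℝ) : ℝ :=
  if m = 0 then 1
  else ∑ l ∈ Finset.Icc 1 m, (Nat.choose (m - 1) (l - 1) : ℝ) * (-x) ^ l / (Nat.factorial l : ℝ)

/-- The sequence `a_j^{(λ,μ)}`, extended by zero to negative indices. -/
noncomputable def aInt (lam mu : ℝ) (j : ℤ) : ℝ :=
  if j < 0 then 0
  else Real.sqrt lam * mu ^ ((j : ℝ) / 2) * lagM1 j.toNat (-Real.log lam)

/-- The Toeplitz matrix built from the sequence `a^{(λ,μ)}`. -/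
noncomputable def toepA (lam mu : ℝ) (n : ℕ) : Matrix (Fin n) (Fin n) ℂ :=
  Matrix.of fun i k => ((aInt lam mu (((i : ℕ) : ℤ) - ((k : ℕ) : ℤ)) : ℝ) : ℂ)

/-- Row sums of the binomial/exponential double series. -/
lemma aux_hasSum {𝕜 : Type*} [RCLike 𝕜] (c : 𝕜) {t : 𝕜} (ht : ‖t‖ < 1) (l : ℕ) :
    HasSum (fun k : ℕ =>
        ((Nat.choose (l + k - 1) k : ℕ) : 𝕜) * (c ^ l / (Nat.factorial l : 𝕜)) * t ^ (l + k))
      ((c * (t / (1 - t))) ^ l / (Nat.factorial l : 𝕜)) := by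
  cases l with
  | zero =>
    have h : (fun k : ℕ =>
        ((Nat.choose (0 + k - 1) k : ℕ) : 𝕜) * (c ^ 0 / (Nat.factorial 0 : 𝕜)) * t ^ (0 + k))
        = fun k : ℕ => if k = 0 then (1 : 𝕜) else 0 := by
      funext k
      cases k with
      | zero => simp
      | succ n =>
        simp [Nat.choose_eq_zero_of_lt (show 0 + (n + 1) - 1 < n + 1 by omega)]
    rw [h]
    simpa using hasSum_ite_eq (0 : ℕ) (1 : 𝕜)
  | succ l =>
    have base := (hasSum_choose_mul_geometric_of_norm_lt_one (𝕜 := 𝕜) l ht).mul_left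
      (c ^ (l + 1) / (Nat.factorial (l + 1) : 𝕜) * t ^ (l + 1))
    have e1 : ∀ k : ℕ, c ^ (l + 1) / (Nat.factorial (l + 1) : 𝕜) * t ^ (l + 1) *
        (((Nat.choose (k + l) l : ℕ) : 𝕜) * t ^ k)
        = ((Nat.choose (l + 1 + k - 1) k : ℕ) : 𝕜) *
          (c ^ (l + 1) / (Nat.factorial (l + 1) : 𝕜)) * t ^ (l + 1 + k) := by
      intro k
      have hc : Nat.choose (l + 1 + k - 1) k = Nat.choose (k + l) l := by
        have h' : l + 1 + k - 1 = k + l := by omega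
        rw [h', Nat.choose_symm_add]
      rw [hc, pow_add]
      ring
    have e2 : (c * (t / (1 - t))) ^ (l + 1) / (Nat.factorial (l + 1) : 𝕜)
        = c ^ (l + 1) / (Nat.factorial (l + 1) : 𝕜) * t ^ (l + 1) * (1 / (1 - t) ^ (l + 1)) := by
      rw [mul_pow, div_pow]
      ring
    rw [e2]
    exact (funext e1) ▸ base

/-- Antidiagonal sums of the double series give the Laguerre coefficients. -/
lemma row_eq (x : ℝ) (t : ℂ) (m : ℕ) :
    ∑ kl ∈ Finset.HasAntidiagonal.antidiagonal m,
        (((Nat.choose (kl.1 + kl.2 - 1) kl.2 : ℕ) : ℂ) *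
          (((-x : ℝ) : ℂ) ^ kl.1 / (Nat.factorial kl.1 : ℂ)) * t ^ (kl.1 + kl.2))
      = ((lagM1 m x : ℝ) : ℂ) * t ^ m := by
  rw [Finset.Nat.sum_antidiagonal_eq_sum_range_succ_mk]
  rcases Nat.eq_zero_or_pos m with hm | hm
  · subst hm; simp [lagM1]
  · have hm0 : m ≠ 0 := by omega
    have hrange : Finset.range (m + 1) = insert 0 (Finset.Icc 1 m) := by
      ext i
      simp only [Finset.mem_range, Finset.mem_insert, Finset.mem_Icc]
      omega
    rw [hrange, Finset.sum_insert (by simp)]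
    have h0 : ((Nat.choose (0 + (m - 0) - 1) (m - 0) : ℕ) : ℂ) *
        (((-x : ℝ) : ℂ) ^ 0 / (Nat.factorial 0 : ℂ)) * t ^ (0 + (m - 0)) = 0 := by
      have : Nat.choose (0 + (m - 0) - 1) (m - 0) = 0 :=
        Nat.choose_eq_zero_of_lt (by omega)
      rw [this]
      simp
    rw [h0, zero_add]
    have hL : ((lagM1 m x : ℝ) : ℂ)
        = ∑ l ∈ Finset.Icc 1 m,
            ((Nat.choose (m - 1) (l - 1) : ℕ) : ℂ) * ((-x : ℝ) : ℂ) ^ l / (Nat.factorial l : ℂ) := by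
      rw [lagM1, if_neg hm0]
      push_cast
      ring
    rw [hL, Finset.sum_mul]
    refine Finset.sum_congr rfl ?_
    intro i hi
    simp only [Finset.mem_Icc] at hi
    dsimp only
    have h1 : i + (m - i) = m := by omega
    rw [h1]
    have h2 : Nat.choose (m - 1) (m - i) = Nat.choose (m - 1) (i - 1) :=
      Nat.choose_symm_of_eq_add (by omega)
    rw [h2]
    ring

set_option maxHeartbeats 2000000 in
/-- Generating function of the generalised Laguerre polynomials `L_m^{(-1)}`. -/
lemma lag_gen (x : ℝ) {t : ℂ} (ht : ‖t‖ < 1) :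
    HasSum (fun m : ℕ => ((lagM1 m x : ℝ) : ℂ) * t ^ m)
      (Complex.exp (((-x : ℝ) : ℂ) * (t / (1 - t)))) ∧
    Summable fun m : ℕ => ‖((lagM1 m x : ℝ) : ℂ) * t ^ m‖ := by
  set c : ℂ := ((-x : ℝ) : ℂ) with hc
  set F : ℕ × ℕ → ℂ := fun p =>
    ((Nat.choose (p.1 + p.2 - 1) p.2 : ℕ) : ℂ) *
      (c ^ p.1 / (Nat.factorial p.1 : ℂ)) * t ^ (p.1 + p.2) with hF
  have hrow : ∀ l : ℕ, HasSum (fun k => F (l, k)) ((c * (t / (1 - t))) ^ l / (Nat.factorial l : ℂ)) :=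
    fun l => aux_hasSum c ht l
  have htnorm : ‖(‖t‖ : ℝ)‖ < 1 := by rwa [norm_norm]
  have hFnorm_eq : ∀ p : ℕ × ℕ, ‖F p‖
      = ((Nat.choose (p.1 + p.2 - 1) p.2 : ℕ) : ℝ) *
          ((|x| : ℝ) ^ p.1 / (Nat.factorial p.1 : ℝ)) * ‖t‖ ^ (p.1 + p.2) := by
    intro p
    simp [hF, hc, norm_mul, norm_div, norm_pow, Complex.norm_natCast, Complex.norm_real,
      Real.norm_eq_abs, abs_neg]
  have hrown : ∀ l : ℕ, HasSum (fun k => ‖F (l, k)‖)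
      ((|x| * (‖t‖ / (1 - ‖t‖))) ^ l / (Nat.factorial l : ℝ)) := by
    intro l
    exact (aux_hasSum (𝕜 := ℝ) (|x|) htnorm l).congr_fun fun k => hFnorm_eq (l, k)
  have hFnorm : Summable fun p : ℕ × ℕ => ‖F p‖ := by
    refine (summable_prod_of_nonneg (fun p => norm_nonneg _)).2 ⟨fun l => (hrown l).summable, ?_⟩
    refine (Real.summable_pow_div_factorial (|x| * (‖t‖ / (1 - ‖t‖)))).congr ?_
    intro l
    exact ((hrown l).tsum_eq).symm
  have hFs : Summable F := hFnorm.of_norm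
  have hexp : HasSum (fun l : ℕ => (c * (t / (1 - t))) ^ l / (Nat.factorial l : ℂ))
      (Complex.exp (c * (t / (1 - t)))) := by
    rw [Complex.exp_eq_exp_ℂ]
    exact NormedSpace.expSeries_div_hasSum_exp _
  have htsumF : ∑' p : ℕ × ℕ, F p = Complex.exp (c * (t / (1 - t))) := by
    rw [Summable.tsum_prod' hFs (fun l => (hrow l).summable)]
    rw [tsum_congr (fun l => (hrow l).tsum_eq)]
    exact hexp.tsum_eq
  -- regroup along antidiagonals
  set e := Finset.HasAntidiagonal.sigmaAntidiagonalEquivProd (A := ℕ) with he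
  have hG : Summable (fun σ => F (e σ)) := e.summable_iff.2 hFs
  have hGnorm : Summable (fun σ => ‖F (e σ)‖) := e.summable_iff.2 hFnorm
  have hfiber : ∀ m : ℕ, ∑' (q : (Finset.HasAntidiagonal.antidiagonal m : Finset (ℕ × ℕ))), F (e ⟨m, q⟩)
      = ∑ kl ∈ Finset.HasAntidiagonal.antidiagonal m, F kl := by
    intro m
    rw [tsum_fintype]
    exact Finset.sum_coe_sort (Finset.HasAntidiagonal.antidiagonal m) F
  have hfibern : ∀ m : ℕ, ∑' (q : (Finset.HasAntidiagonal.antidiagonal m : Finset (ℕ × ℕ))), ‖F (e ⟨m, q⟩)‖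
      = ∑ kl ∈ Finset.HasAntidiagonal.antidiagonal m, ‖F kl‖ := by
    intro m
    rw [tsum_fintype]
    exact Finset.sum_coe_sort (Finset.HasAntidiagonal.antidiagonal m) (fun kl => ‖F kl‖)
  have htsumG : ∑' m : ℕ, (∑ kl ∈ Finset.HasAntidiagonal.antidiagonal m, F kl) = ∑' p : ℕ × ℕ, F p := by
    calc ∑' m : ℕ, (∑ kl ∈ Finset.HasAntidiagonal.antidiagonal m, F kl)
        = ∑' m : ℕ, ∑' (q : (Finset.HasAntidiagonal.antidiagonal m : Finset (ℕ × ℕ))), F (e ⟨m, q⟩) :=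
          (tsum_congr fun m => (hfiber m).symm)
      _ = ∑' σ, F (e σ) :=
          (Summable.tsum_sigma' (fun m => (hasSum_fintype _).summable) hG).symm
      _ = ∑' p : ℕ × ℕ, F p := e.tsum_eq F
  have hnormrows : Summable (fun m : ℕ => ∑ kl ∈ Finset.HasAntidiagonal.antidiagonal m, ‖F kl‖) := by
    exact hGnorm.sigma.congr hfibern
  have hsummN : Summable (fun m : ℕ => ‖((lagM1 m x : ℝ) : ℂ) * t ^ m‖) := by
    refine Summable.of_nonneg_of_le (fun m => norm_nonneg _) (fun m => ?_) hnormrows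
    rw [← row_eq x t m]
    exact norm_sum_le _ _
  refine ⟨?_, hsummN⟩
  have hs : Summable (fun m : ℕ => ((lagM1 m x : ℝ) : ℂ) * t ^ m) := hsummN.of_norm
  have htsum : ∑' m : ℕ, ((lagM1 m x : ℝ) : ℂ) * t ^ m = Complex.exp (c * (t / (1 - t))) := by
    rw [← htsumF, ← htsumG]
    exact tsum_congr fun m => (row_eq x t m).symm
  exact htsum ▸ hs.hasSum

/-- The Fourier-type series with coefficients sqrt(lam) * mu^(j/2) * L_j^(-1)(-ln lam)
converges absolutely, sums to lam^(-1/2 + 1/(1 - sqrt(mu) e^(i θ))), and the squared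
modulus of the sum equals lam^((1-mu)/(1 - 2 sqrt(mu) cos θ + mu)). -/
theorem laguerre_series_sum
    (lam mu : ℝ) (hlam : lam ∈ Set.Ioo (0:ℝ) 1) (hmu : mu ∈ Set.Ioo (0:ℝ) 1) (θ : ℝ) :
    Summable (fun j : ℕ =>
        ‖(((Real.sqrt lam * mu ^ ((j : ℝ) / 2) * lagM1 j (-Real.log lam) : ℝ) : ℂ)
          * Complex.exp (Complex.I * (j : ℂ) * (θ : ℂ)))‖)
    ∧ (∑' j : ℕ, ((Real.sqrt lam * mu ^ ((j : ℝ) / 2) * lagM1 j (-Real.log lam) : ℝ) : ℂ)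
          * Complex.exp (Complex.I * (j : ℂ) * (θ : ℂ)))
        = Complex.exp ((-1/2 + 1 / (1 - (Real.sqrt mu : ℂ) * Complex.exp (Complex.I * (θ : ℂ))))
            * (Real.log lam : ℂ))
    ∧ ‖(∑' j : ℕ, ((Real.sqrt lam * mu ^ ((j : ℝ) / 2) * lagM1 j (-Real.log lam) : ℝ) : ℂ)
          * Complex.exp (Complex.I * (j : ℂ) * (θ : ℂ)))‖ ^ 2
        = lam ^ ((1 - mu) / (1 - 2 * Real.sqrt mu * Real.cos θ + mu)) := by
  obtain ⟨hlam0, hlam1⟩ := hlam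
  obtain ⟨hmu0, hmu1⟩ := hmu
  set x : ℝ := -Real.log lam with hx
  set t : ℂ := (Real.sqrt mu : ℂ) * Complex.exp (Complex.I * (θ : ℂ)) with htdef
  have hexpabs : ‖Complex.exp (Complex.I * (θ : ℂ))‖ = 1 := by
    rw [Complex.norm_exp]
    simp
  have ht : ‖t‖ < 1 := by
    rw [htdef]
    rw [norm_mul, hexpabs, mul_one,
      Complex.norm_real, Real.norm_eq_abs, abs_of_nonneg (Real.sqrt_nonneg mu)]
    rw [show (1 : ℝ) = Real.sqrt 1 by simp]
    exact Real.sqrt_lt_sqrt hmu0.le hmu1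
  have h1t : (1 : ℂ) - t ≠ 0 := by
    intro h
    rw [sub_eq_zero] at h
    rw [← h] at ht
    simp at ht
  obtain ⟨hsum, hnorm⟩ := lag_gen x ht
  have hxc : ((-x : ℝ) : ℂ) = (Real.log lam : ℂ) := by rw [hx]; push_cast; ring
  rw [hxc] at hsum
  -- rewrite the terms of the series
  have hmupow : ∀ j : ℕ, (mu ^ ((j : ℝ) / 2) : ℝ) = Real.sqrt mu ^ j := by
    intro j
    rw [Real.sqrt_eq_rpow, ← Real.rpow_natCast (mu ^ (1 / (2:ℝ))) j, ← Real.rpow_mul hmu0.le]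
    congr 1
    ring
  have hAeq : ∀ j : ℕ,
      ((Real.sqrt lam * mu ^ ((j : ℝ) / 2) * lagM1 j x : ℝ) : ℂ)
          * Complex.exp (Complex.I * (j : ℂ) * (θ : ℂ))
        = (Real.sqrt lam : ℂ) * (((lagM1 j x : ℝ) : ℂ) * t ^ j) := by
    intro j
    rw [htdef, mul_pow, show Complex.I * (j : ℂ) * (θ : ℂ) = (j : ℕ) * (Complex.I * (θ : ℂ)) by
      push_cast; ring, Complex.exp_nat_mul]
    rw [hmupow j]
    push_cast
    ring
  -- summability
  have hsummA : Summable (fun j : ℕ =>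
      ‖(((Real.sqrt lam * mu ^ ((j : ℝ) / 2) * lagM1 j x : ℝ) : ℂ)
        * Complex.exp (Complex.I * (j : ℂ) * (θ : ℂ)))‖) := by
    refine (hnorm.mul_left (Real.sqrt lam)).congr ?_
    intro j
    rw [hAeq j]
    simp [norm_mul, Complex.norm_real, Real.norm_eq_abs, abs_of_nonneg (Real.sqrt_nonneg lam),
      mul_assoc]
  -- value of the sum
  have hA : HasSum (fun j : ℕ =>
      ((Real.sqrt lam * mu ^ ((j : ℝ) / 2) * lagM1 j x : ℝ) : ℂ)
        * Complex.exp (Complex.I * (j : ℂ) * (θ : ℂ)))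
      ((Real.sqrt lam : ℂ) * Complex.exp ((Real.log lam : ℂ) * (t / (1 - t)))) := by
    exact (hsum.mul_left ((Real.sqrt lam : ℂ))).congr_fun hAeq
  have hsqrt : (Real.sqrt lam : ℂ) = Complex.exp ((Real.log lam : ℂ) / 2) := by
    have h1 : Real.sqrt lam = Real.exp (Real.log lam * (1 / 2)) := by
      rw [Real.sqrt_eq_rpow, Real.rpow_def_of_pos hlam0]
    rw [h1, Complex.ofReal_exp]
    push_cast
    ring_nf
  have hval : (Real.sqrt lam : ℂ) * Complex.exp ((Real.log lam : ℂ) * (t / (1 - t)))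
      = Complex.exp ((-1/2 + 1 / (1 - t)) * (Real.log lam : ℂ)) := by
    rw [hsqrt, ← Complex.exp_add]
    congr 1
    field_simp
    ring
  have htsumA : (∑' j : ℕ, ((Real.sqrt lam * mu ^ ((j : ℝ) / 2) * lagM1 j x : ℝ) : ℂ)
        * Complex.exp (Complex.I * (j : ℂ) * (θ : ℂ)))
      = Complex.exp ((-1/2 + 1 / (1 - t)) * (Real.log lam : ℂ)) := by
    rw [hA.tsum_eq, hval]
  refine ⟨hsummA, htsumA, ?_⟩
  -- squared modulus
  rw [htsumA]
  set z : ℂ := -1/2 + 1 / (1 - t) with hz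
  have hre : (z * (Real.log lam : ℂ)).re = z.re * Real.log lam := by
    simp [Complex.mul_re]
  rw [Complex.norm_exp, hre]
  -- compute z.re
  have hexpI : Complex.exp (Complex.I * (θ : ℂ))
      = (Real.cos θ : ℂ) + (Real.sin θ : ℂ) * Complex.I := by
    rw [mul_comm, Complex.exp_mul_I, Complex.ofReal_cos, Complex.ofReal_sin]
  have htre : t.re = Real.sqrt mu * Real.cos θ := by
    rw [htdef, Complex.re_ofReal_mul, mul_comm Complex.I, Complex.exp_ofReal_mul_I_re]
  have htim : t.im = Real.sqrt mu * Real.sin θ := by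
    rw [htdef, Complex.im_ofReal_mul, mul_comm Complex.I, Complex.exp_ofReal_mul_I_im]
  set D : ℝ := 1 - 2 * Real.sqrt mu * Real.cos θ + mu with hD
  have hnormSq : Complex.normSq (1 - t) = D := by
    rw [Complex.normSq_apply]
    simp only [Complex.sub_re, Complex.sub_im, Complex.one_re, Complex.one_im, htre, htim]
    have hs2 : Real.sqrt mu ^ 2 = mu := Real.sq_sqrt hmu0.le
    have hcs : Real.sin θ ^ 2 + Real.cos θ ^ 2 = 1 := Real.sin_sq_add_cos_sq θ
    nlinarith [hs2, hcs]
  have hDpos : 0 < D := by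
    rw [← hnormSq]
    exact Complex.normSq_pos.2 h1t
  have hsubre : (1 - t).re = 1 - Real.sqrt mu * Real.cos θ := by
    rw [Complex.sub_re, Complex.one_re, htre]
  have hinv : ((1 : ℂ) / (1 - t)).re = (1 - Real.sqrt mu * Real.cos θ) / D := by
    rw [one_div, Complex.inv_re, hnormSq, hsubre]
  have hzre : z.re = -1/2 + (1 - Real.sqrt mu * Real.cos θ) / D := by
    rw [hz, Complex.add_re, hinv]
    norm_num
  have hkey : 2 * z.re = (1 - mu) / D := by
    rw [hzre]
    have hs2 : Real.sqrt mu ^ 2 = mu := Real.sq_sqrt hmu0.le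
    field_simp
    rw [hD]
    ring
  rw [Real.rpow_def_of_pos hlam0]
  rw [sq, ← Real.exp_add]
  congr 1
  have : z.re * Real.log lam + z.re * Real.log lam = (2 * z.re) * Real.log lam := by ring
  rw [this, hkey]
  ring
end
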